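/- arXiv:2311.02172 — 10 statements merged into one kernel-verified Lean document; each statement's English description precedes it below -/
import Mathlib

section
/- Let μ be a compactly supported Borel probability measure on ℝ^d, let B ⊂ ℝ^d be a finite set, let ν be a probability distribution on B, let c : ℝ^d × ℝ^d → ℝ≥0 be a continuous ground cost, let δ > 0, and let w : B → ℝ be a weight function. Suppose τ = (τ_b)_{b∈B} is a transport plan from μ to ν such that for every b ∈ B, τ_b-almost every x ∈ ℝ^d has b as a δ-approximate weighted nearest neighbor with respect to w. Then τ is δ-close: for every transport plan τ' from μ to ν, ¢(τ) ≤ ¢(τ') + δ. -/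
open MeasureTheory
open scoped ENNReal

noncomputable section

/-- A semi-discrete transport plan from a Borel probability measure `μ` on `ℝ^d` to the
discrete distribution `ν` supported on the finite set `B`: a family `(τ b)_{b ∈ B}` of
measures with `∑ b ∈ B, τ b = μ` and `τ b univ = ν b` for every `b ∈ B`. -/
def IsSemiDiscretePlan {d : ℕ} (μ : Measure (EuclideanSpace ℝ (Fin d)))
    (B : Finset (EuclideanSpace ℝ (Fin d))) (ν : EuclideanSpace ℝ (Fin d) → ℝ≥0∞)
    (τ : EuclideanSpace ℝ (Fin d) → Measure (EuclideanSpace ℝ (Fin d))) : Prop :=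
  (∑ b ∈ B, τ b) = μ ∧ ∀ b ∈ B, τ b Set.univ = ν b

/-- The cost `¢(τ) = ∑_{b ∈ B} ∫ c(x,b) dτ_b(x)` of a semi-discrete transport plan. -/
def planCost {d : ℕ} (c : EuclideanSpace ℝ (Fin d) → EuclideanSpace ℝ (Fin d) → ℝ)
    (B : Finset (EuclideanSpace ℝ (Fin d)))
    (τ : EuclideanSpace ℝ (Fin d) → Measure (EuclideanSpace ℝ (Fin d))) : ℝ :=
  ∑ b ∈ B, ∫ x, c x b ∂(τ b)

/-- A continuous function is integrable w.r.t. a finite measure vanishing outside a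
compact set. -/
lemma integrable_of_compact_support {X : Type*} [MeasurableSpace X] [TopologicalSpace X]
    [OpensMeasurableSpace X] {K : Set X} (hK : IsCompact K) (σ : Measure X)
    [IsFiniteMeasure σ] (hσ : σ Kᶜ = 0) {g : X → ℝ} (hg : Continuous g) :
    Integrable g σ := by
  obtain ⟨C, hC⟩ := hK.exists_bound_of_continuousOn hg.continuousOn
  have hae : ∀ᵐ x ∂σ, x ∈ K := by
    rw [MeasureTheory.ae_iff]
    exact hσ
  exact (integrable_const C).mono' hg.aestronglyMeasurable
    (hae.mono fun x hx => hC x hx)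

/-- If `τ` is a transport plan from `μ` to `ν` such that for every `b ∈ B`, `τ_b`-almost
every `x` has `b` as a `δ`-approximate weighted nearest neighbor with respect to the weights
`w`, then `τ` is `δ`-close: `¢(τ) ≤ ¢(τ') + δ` for every transport plan `τ'`. -/
theorem delta_wnn_plan_is_delta_close {d : ℕ}
    (μ : Measure (EuclideanSpace ℝ (Fin d))) [IsProbabilityMeasure μ]
    (hμc : ∃ K : Set (EuclideanSpace ℝ (Fin d)), IsCompact K ∧ μ Kᶜ = 0)
    (B : Finset (EuclideanSpace ℝ (Fin d))) (hB : B.Nonempty)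
    (ν : EuclideanSpace ℝ (Fin d) → ℝ≥0∞) (hν : ∑ b ∈ B, ν b = 1)
    (c : EuclideanSpace ℝ (Fin d) → EuclideanSpace ℝ (Fin d) → ℝ)
    (hc0 : ∀ x y, 0 ≤ c x y)
    (hccont : Continuous fun p : EuclideanSpace ℝ (Fin d) × EuclideanSpace ℝ (Fin d) =>
      c p.1 p.2)
    (δ : ℝ) (hδ : 0 < δ)
    (w : EuclideanSpace ℝ (Fin d) → ℝ)
    (τ : EuclideanSpace ℝ (Fin d) → Measure (EuclideanSpace ℝ (Fin d)))
    (hτ : IsSemiDiscretePlan μ B ν τ)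
    (hWNN : ∀ b ∈ B, ∀ᵐ x ∂(τ b),
      c x b - w b ≤ B.inf' hB (fun b' => c x b' - w b') + δ) :
    ∀ τ' : EuclideanSpace ℝ (Fin d) → Measure (EuclideanSpace ℝ (Fin d)),
      IsSemiDiscretePlan μ B ν τ' → planCost c B τ ≤ planCost c B τ' + δ := by
  obtain ⟨K, hK, hμK⟩ := hμc
  obtain ⟨hτsum, hτν⟩ := hτ
  intro τ' hτ'
  obtain ⟨hτ'sum, hτ'ν⟩ := hτ'
  set f : EuclideanSpace ℝ (Fin d) → ℝ :=
    fun x => B.inf' hB (fun b' => c x b' - w b') with hf_def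
  have hcb : ∀ b : EuclideanSpace ℝ (Fin d), Continuous fun x => c x b := fun b =>
    hccont.comp (Continuous.prodMk_left b)
  have hf : Continuous f :=
    Continuous.finset_inf'_apply hB fun b _ => (hcb b).sub continuous_const
  -- basic facts about the plans
  have key : ∀ (σ : EuclideanSpace ℝ (Fin d) → Measure (EuclideanSpace ℝ (Fin d))),
      (∑ b ∈ B, σ b) = μ → ∀ b ∈ B,
      σ b ≤ μ ∧ IsFiniteMeasure (σ b) ∧ σ b Kᶜ = 0 := by
    intro σ hσ b hb
    have hle : σ b ≤ μ := by
      rw [← hσ]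
      refine Measure.le_iff'.2 fun s => ?_
      rw [Measure.finset_sum_apply]
      exact Finset.single_le_sum (f := fun i => σ i s) (fun i _ => zero_le) hb
    have hfin : IsFiniteMeasure (σ b) :=
      ⟨lt_of_le_of_lt (Measure.le_iff'.1 hle Set.univ) (by simp)⟩
    exact ⟨hle, hfin, le_antisymm ((Measure.le_iff'.1 hle Kᶜ).trans hμK.le) zero_le⟩
  have intg : ∀ (σ : EuclideanSpace ℝ (Fin d) → Measure (EuclideanSpace ℝ (Fin d))),
      (∑ b ∈ B, σ b) = μ → ∀ b ∈ B, ∀ g : EuclideanSpace ℝ (Fin d) → ℝ, Continuous g →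
      Integrable g (σ b) := by
    intro σ hσ b hb g hg
    obtain ⟨_, hfin, hK0⟩ := key σ hσ b hb
    exact integrable_of_compact_support hK (σ b) hK0 hg
  have hνfin : ∀ b ∈ B, ν b ≠ ∞ := by
    intro b hb
    exact ne_top_of_le_ne_top (by simp) (hν ▸ Finset.single_le_sum
      (fun (i : EuclideanSpace ℝ (Fin d)) _ => (show 0 ≤ ν i from zero_le)) hb)
  have hm : ∑ b ∈ B, (ν b).toReal = 1 := by
    rw [← ENNReal.toReal_sum hνfin, hν, ENNReal.toReal_one]
  -- Step A : planCost τ ≤ ∫ f ∂μ + ∑ w b m b + δ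
  have stepA : planCost c B τ ≤
      (∑ b ∈ B, ∫ x, f x ∂(τ b)) + (∑ b ∈ B, w b * (ν b).toReal) + δ := by
    have h1 : ∀ b ∈ B, ∫ x, c x b ∂(τ b) ≤
        ∫ x, f x ∂(τ b) + (w b + δ) * (ν b).toReal := by
      intro b hb
      have hint_f := intg τ hτsum b hb f hf
      have hint_c := intg τ hτsum b hb _ (hcb b)
      have := key τ hτsum b hb
      haveI : IsFiniteMeasure (τ b) := this.2.1
      have hmono : ∫ x, c x b ∂(τ b) ≤ ∫ x, f x + (w b + δ) ∂(τ b) := by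
        apply integral_mono_ae hint_c (hint_f.add (integrable_const _))
        filter_upwards [hWNN b hb] with x hx
        simp only [Pi.add_apply]
        have hfx : f x = B.inf' hB fun b' => c x b' - w b' := rfl
        linarith
      calc ∫ x, c x b ∂(τ b) ≤ ∫ x, f x + (w b + δ) ∂(τ b) := hmono
        _ = ∫ x, f x ∂(τ b) + (w b + δ) * (ν b).toReal := by
            rw [integral_add hint_f (integrable_const _), integral_const, Measure.real_def, hτν b hb,
              smul_eq_mul, mul_comm]
    calc planCost c B τ ≤ ∑ b ∈ B, (∫ x, f x ∂(τ b) + (w b + δ) * (ν b).toReal) :=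
          Finset.sum_le_sum h1
      _ = (∑ b ∈ B, ∫ x, f x ∂(τ b)) + (∑ b ∈ B, w b * (ν b).toReal) + δ := by
          rw [Finset.sum_add_distrib]
          have : ∑ b ∈ B, (w b + δ) * (ν b).toReal
              = (∑ b ∈ B, w b * (ν b).toReal) + δ * ∑ b ∈ B, (ν b).toReal := by
            rw [Finset.mul_sum, ← Finset.sum_add_distrib]
            exact Finset.sum_congr rfl fun b _ => by ring
          rw [this, hm]
          ring
  -- the two μ-integrals agree
  have hsum_eq : ∑ b ∈ B, ∫ x, f x ∂(τ b) = ∑ b ∈ B, ∫ x, f x ∂(τ' b) := by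
    have h1 : ∫ x, f x ∂μ = ∑ b ∈ B, ∫ x, f x ∂(τ b) := by
      rw [← hτsum]; exact integral_finset_sum_measure fun b hb => intg τ hτsum b hb f hf
    have h2 : ∫ x, f x ∂μ = ∑ b ∈ B, ∫ x, f x ∂(τ' b) := by
      rw [← hτ'sum]; exact integral_finset_sum_measure fun b hb => intg τ' hτ'sum b hb f hf
    rw [← h1, h2]
  -- Step B : ∫ f ∂μ + ∑ w b m b ≤ planCost τ'
  have stepB : (∑ b ∈ B, ∫ x, f x ∂(τ' b)) + (∑ b ∈ B, w b * (ν b).toReal)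
      ≤ planCost c B τ' := by
    have h1 : ∀ b ∈ B, ∫ x, f x ∂(τ' b) + w b * (ν b).toReal ≤ ∫ x, c x b ∂(τ' b) := by
      intro b hb
      have hint_f := intg τ' hτ'sum b hb f hf
      have hint_c := intg τ' hτ'sum b hb _ (hcb b)
      haveI : IsFiniteMeasure (τ' b) := (key τ' hτ'sum b hb).2.1
      have hmono : ∫ x, f x + w b ∂(τ' b) ≤ ∫ x, c x b ∂(τ' b) := by
        apply integral_mono_ae (hint_f.add (integrable_const _)) hint_c
        filter_upwards with x
        have : f x ≤ c x b - w b := Finset.inf'_le _ hb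
        simp only [Pi.add_apply]
        linarith
      calc ∫ x, f x ∂(τ' b) + w b * (ν b).toReal = ∫ x, f x + w b ∂(τ' b) := by
            rw [integral_add hint_f (integrable_const _), integral_const, Measure.real_def, hτ'ν b hb,
              smul_eq_mul, mul_comm]
        _ ≤ ∫ x, c x b ∂(τ' b) := hmono
    calc (∑ b ∈ B, ∫ x, f x ∂(τ' b)) + (∑ b ∈ B, w b * (ν b).toReal)
        = ∑ b ∈ B, (∫ x, f x ∂(τ' b) + w b * (ν b).toReal) := (Finset.sum_add_distrib).symm
      _ ≤ planCost c B τ' := Finset.sum_le_sum h1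
  rw [hsum_eq] at stepA
  linarith
end
end

section
/- Let B ⊂ ℝ^d be a finite set, let c : ℝ^d × ℝ^d → ℝ≥0 be a ground cost, and let δ > 0. Suppose a₁, a₂ ∈ ℝ^d are such that for every weight function w : B → ℝ whose values are nonnegative integer multiples of δ and every b ∈ B, b is a weighted nearest neighbor of a₁ with respect to w if and only if b is a weighted nearest neighbor of a₂ with respect to w. Then for every weight function w : B → ℝ whose values are nonnegative integer multiples of δ, every δ-approximate weighted nearest neighbor of a₁ with respect to w is also a δ-approximate weighted nearest neighbor of a₂ with respect to w. -/
noncomputable section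

/-- If `a₁` and `a₂` have the same weighted nearest neighbors in `B` with respect to every
weight function whose values are nonnegative integer multiples of `δ`, then every
`δ`-approximate weighted nearest neighbor of `a₁` (with respect to such a weight function)
is also a `δ`-approximate weighted nearest neighbor of `a₂`. -/
theorem same_wnn_implies_same_approx_wnn {d : ℕ}
    (B : Finset (EuclideanSpace ℝ (Fin d))) (hB : B.Nonempty)
    (c : EuclideanSpace ℝ (Fin d) → EuclideanSpace ℝ (Fin d) → ℝ)
    (hc0 : ∀ x y, 0 ≤ c x y)
    (δ : ℝ) (hδ : 0 < δ)
    (a₁ a₂ : EuclideanSpace ℝ (Fin d))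
    (hcell : ∀ w : EuclideanSpace ℝ (Fin d) → ℝ,
      (∀ b ∈ B, ∃ k : ℕ, w b = (k : ℝ) * δ) → ∀ b ∈ B,
        (c a₁ b - w b = B.inf' hB (fun b' => c a₁ b' - w b') ↔
         c a₂ b - w b = B.inf' hB (fun b' => c a₂ b' - w b'))) :
    ∀ w : EuclideanSpace ℝ (Fin d) → ℝ,
      (∀ b ∈ B, ∃ k : ℕ, w b = (k : ℝ) * δ) → ∀ b ∈ B,
        c a₁ b - w b ≤ B.inf' hB (fun b' => c a₁ b' - w b') + δ →
        c a₂ b - w b ≤ B.inf' hB (fun b' => c a₂ b' - w b') + δ := by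
  classical
  intro w hw b hb happrox
  set w' : EuclideanSpace ℝ (Fin d) → ℝ := fun x => if x = b then w x + δ else w x with hw'
  have hw'mult : ∀ b' ∈ B, ∃ k : ℕ, w' b' = (k : ℝ) * δ := by
    intro b' hb'
    obtain ⟨k, hk⟩ := hw b' hb'
    by_cases h : b' = b
    · refine ⟨k + 1, ?_⟩
      have hkb : w b = (k:ℝ) * δ := h ▸ hk
      simp [hw', h, hkb]; push_cast; ring
    · exact ⟨k, by simp [hw', h, hk]⟩
  have hwb : w' b = w b + δ := by simp [hw']
  have hwne : ∀ b' : EuclideanSpace ℝ (Fin d), b' ≠ b → w' b' = w b' := by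
    intro b' h; simp [hw', h]
  -- b is an exact WNN of a₁ w.r.t. w'
  have h1 : c a₁ b - w' b = B.inf' hB (fun b' => c a₁ b' - w' b') := by
    apply le_antisymm
    · apply Finset.le_inf'
      intro b' hb'
      by_cases h : b' = b
      · subst h; linarith
      · rw [hwne b' h, hwb]
        have := Finset.inf'_le (fun b' => c a₁ b' - w b') hb'
        linarith
    · exact Finset.inf'_le _ hb
  have h2 : c a₂ b - w' b = B.inf' hB (fun b' => c a₂ b' - w' b') :=
    (hcell w' hw'mult b hb).mp h1
  -- unwind for a₂
  rw [hwb] at h2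
  have h3 : ∀ b' ∈ B, c a₂ b - w b - δ ≤ c a₂ b' - w b' := by
    intro b' hb'
    have := Finset.inf'_le (fun b' => c a₂ b' - w' b') hb'
    rw [← h2] at this
    by_cases h : b' = b
    · subst h; linarith
    · rw [hwne b' h] at this; linarith
  have h4 : c a₂ b - w b - δ ≤ B.inf' hB (fun b' => c a₂ b' - w b') :=
    Finset.le_inf' hB _ h3
  linarith

end
end

section
/- Let μ be a compactly supported Borel probability measure on ℝ^d, let B ⊂ ℝ^d be a finite set, let ν be a probability distribution on B, let c : ℝ^d × ℝ^d → ℝ≥0 be a continuous ground cost, and let δ > 0. Let P be a finite measurable partition of ℝ^d, with a representative point r(ϱ) ∈ ϱ chosen in each part ϱ, such that for every part ϱ, any two points x, y ∈ ϱ have the following property: for every weight function w : B → ℝ with values nonnegative integer multiples of δ and every b ∈ B, b is a weighted nearest neighbor of x with respect to w if and only if b is a weighted nearest neighbor of y with respect to w. Let w : B → ℝ be a weight function with values nonnegative integer multiples of δ, and suppose τ is a transport plan from μ to ν such that for every part ϱ ∈ P and every b ∈ B with τ_b(ϱ) > 0, the point b is a δ-approximate weighted nearest neighbor of r(ϱ)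 with respect to w. Then for every transport plan τ' from μ to ν, ¢(τ) ≤ ¢(τ') + δ. -/
open MeasureTheory
open scoped ENNReal

noncomputable section

/-- Auxiliary: a continuous function is integrable w.r.t. a finite measure vanishing
outside a compact set. -/
lemma integrable_of_compact_support_aux {d : ℕ}
    (σ : Measure (EuclideanSpace ℝ (Fin d))) [IsFiniteMeasure σ]
    {K : Set (EuclideanSpace ℝ (Fin d))} (hK : IsCompact K) (h0 : σ Kᶜ = 0)
    {g : EuclideanSpace ℝ (Fin d) → ℝ} (hg : Continuous g) : Integrable g σ := by
  obtain ⟨M, hM⟩ := hK.exists_bound_of_continuousOn hg.continuousOn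
  refine (integrable_const M).mono' hg.aestronglyMeasurable ?_
  rw [Filter.eventually_iff, mem_ae_iff]
  refine measure_mono_null (fun x hx => ?_) h0
  intro hxK
  exact hx (hM x hxK)

/-- If `P` is a finite measurable partition of `ℝ^d` whose parts are cells of the arrangement
of all weighted Voronoi diagrams for weight vectors with values nonnegative integer multiples
of `δ`, `w` is such a weight vector, and `τ` is a transport plan that transports mass from a
part `ϱ` to `b` only when `b` is a `δ`-approximate weighted nearest neighbor of the
representative `r ϱ`, then `τ` is `δ`-close. -/
theorem partition_delta_wnn_plan_is_delta_close {d : ℕ}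
    (μ : Measure (EuclideanSpace ℝ (Fin d))) [IsProbabilityMeasure μ]
    (hμc : ∃ K : Set (EuclideanSpace ℝ (Fin d)), IsCompact K ∧ μ Kᶜ = 0)
    (B : Finset (EuclideanSpace ℝ (Fin d))) (hB : B.Nonempty)
    (ν : EuclideanSpace ℝ (Fin d) → ℝ≥0∞) (hν : ∑ b ∈ B, ν b = 1)
    (c : EuclideanSpace ℝ (Fin d) → EuclideanSpace ℝ (Fin d) → ℝ)
    (hc0 : ∀ x y, 0 ≤ c x y)
    (hccont : Continuous fun p : EuclideanSpace ℝ (Fin d) × EuclideanSpace ℝ (Fin d) =>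
      c p.1 p.2)
    (δ : ℝ) (hδ : 0 < δ)
    -- `P` is a finite measurable partition of `ℝ^d`:
    (P : Finset (Set (EuclideanSpace ℝ (Fin d))))
    (hPmeas : ∀ ϱ ∈ P, MeasurableSet ϱ)
    (hPdisj : ∀ ϱ₁ ∈ P, ∀ ϱ₂ ∈ P, ϱ₁ ≠ ϱ₂ → Disjoint ϱ₁ ϱ₂)
    (hPcover : ⋃₀ (P : Set (Set (EuclideanSpace ℝ (Fin d)))) = Set.univ)
    -- representative points:
    (r : Set (EuclideanSpace ℝ (Fin d)) → EuclideanSpace ℝ (Fin d))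
    (hr : ∀ ϱ ∈ P, r ϱ ∈ ϱ)
    -- any two points of a part have the same weighted nearest neighbors for every weight
    -- function whose values are nonnegative integer multiples of `δ`:
    (hP : ∀ ϱ ∈ P, ∀ x ∈ ϱ, ∀ y ∈ ϱ,
      ∀ w' : EuclideanSpace ℝ (Fin d) → ℝ,
        (∀ b ∈ B, ∃ k : ℕ, w' b = (k : ℝ) * δ) → ∀ b ∈ B,
          (c x b - w' b = B.inf' hB (fun b' => c x b' - w' b') ↔
           c y b - w' b = B.inf' hB (fun b' => c y b' - w' b')))
    -- the weight function:
    (w : EuclideanSpace ℝ (Fin d) → ℝ)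
    (hw : ∀ b ∈ B, ∃ k : ℕ, w b = (k : ℝ) * δ)
    -- the transport plan:
    (τ : EuclideanSpace ℝ (Fin d) → Measure (EuclideanSpace ℝ (Fin d)))
    (hτ : IsSemiDiscretePlan μ B ν τ)
    (hWNN : ∀ ϱ ∈ P, ∀ b ∈ B, τ b ϱ ≠ 0 →
      c (r ϱ) b - w b ≤ B.inf' hB (fun b' => c (r ϱ) b' - w b') + δ) :
    ∀ τ' : EuclideanSpace ℝ (Fin d) → Measure (EuclideanSpace ℝ (Fin d)),
      IsSemiDiscretePlan μ B ν τ' → planCost c B τ ≤ planCost c B τ' + δ := by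
  classical
  intro τ' hτ'
  obtain ⟨K, hKc, hμK⟩ := hμc
  obtain ⟨hτsum, hτν⟩ := hτ
  obtain ⟨hτ'sum, hτ'ν⟩ := hτ'
  set f : EuclideanSpace ℝ (Fin d) → ℝ :=
    fun x => B.inf' hB (fun b' => c x b' - w b') with hfdef
  -- basic continuity facts
  have hcb : ∀ b, Continuous (fun x => c x b) := fun b =>
    hccont.comp (continuous_id.prodMk continuous_const)
  have hfc : Continuous f :=
    Continuous.finset_inf'_apply hB (fun b _ => (hcb b).sub continuous_const)
  -- integrability for any measure dominated by μ
  have hInt : ∀ σ : Measure (EuclideanSpace ℝ (Fin d)), σ ≤ μ →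
      ∀ g : EuclideanSpace ℝ (Fin d) → ℝ, Continuous g → Integrable g σ := by
    intro σ hσ g hg
    haveI : IsFiniteMeasure σ :=
      ⟨lt_of_le_of_lt (le_trans (hσ Set.univ) (measure_univ (μ := μ)).le) ENNReal.one_lt_top⟩
    have h0 : σ Kᶜ = 0 := le_antisymm (le_trans (hσ Kᶜ) hμK.le) zero_le
    exact integrable_of_compact_support_aux σ hKc h0 hg
  have hfin : ∀ σ : Measure (EuclideanSpace ℝ (Fin d)), σ ≤ μ → IsFiniteMeasure σ := by
    intro σ hσ
    exact ⟨lt_of_le_of_lt (le_trans (hσ Set.univ) (measure_univ (μ := μ)).le) ENNReal.one_lt_top⟩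
  have hleμ : ∀ (σ : EuclideanSpace ℝ (Fin d) → Measure (EuclideanSpace ℝ (Fin d))),
      (∑ b ∈ B, σ b) = μ → ∀ b ∈ B, σ b ≤ μ := by
    intro σ hsum b hb
    refine Measure.le_iff'.2 fun s => ?_
    rw [← hsum, Measure.finset_sum_apply]
    exact Finset.single_le_sum (f := fun i => σ i s) (fun i _ => zero_le) hb
  -- decomposition of the cost
  have decomp : ∀ (σ : EuclideanSpace ℝ (Fin d) → Measure (EuclideanSpace ℝ (Fin d))),
      (∑ b ∈ B, σ b) = μ → (∀ b ∈ B, σ b Set.univ = ν b) →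
      planCost c B σ = (∑ b ∈ B, ∫ x, (c x b - w b) ∂(σ b)) +
        ∑ b ∈ B, w b * (ν b).toReal := by
    intro σ hsum hν'
    unfold planCost
    rw [← Finset.sum_add_distrib]
    refine Finset.sum_congr rfl fun b hb => ?_
    have hint := hInt (σ b) (hleμ σ hsum b hb) _ (hcb b)
    haveI := hfin (σ b) (hleμ σ hsum b hb)
    rw [integral_sub hint (integrable_const _), integral_const, measureReal_def, hν' b hb, smul_eq_mul]
    ring
  -- Step B: the δ-WNN property transfers from the representative to all points of a part
  have stepB : ∀ ϱ ∈ P, ∀ b ∈ B, τ b ϱ ≠ 0 → ∀ x ∈ ϱ, c x b - w b ≤ f x + δ := by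
    intro ϱ hϱ b hb hne x hx
    set w' : EuclideanSpace ℝ (Fin d) → ℝ :=
      fun b' => if b' = b then w b' + δ else w b' with hw'def
    have hw' : ∀ b'' ∈ B, ∃ k : ℕ, w' b'' = (k : ℝ) * δ := by
      intro b'' hb''
      obtain ⟨k, hk⟩ := hw b'' hb''
      by_cases h : b'' = b
      · exact ⟨k + 1, by simp only [hw'def, if_pos h, hk]; push_cast; ring⟩
      · exact ⟨k, by simp only [hw'def, if_neg h, hk]⟩
    -- b is an exact WNN of r ϱ with respect to w'
    have hr' : c (r ϱ) b - w' b = B.inf' hB (fun b' => c (r ϱ) b' - w' b') := by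
      refine le_antisymm (Finset.le_inf' _ _ ?_) (Finset.inf'_le _ hb)
      intro b'' hb''
      by_cases h : b'' = b
      · subst h; exact le_refl _
      · have h1 := hWNN ϱ hϱ b hb hne
        have h2 : B.inf' hB (fun b' => c (r ϱ) b' - w b') ≤ c (r ϱ) b'' - w b'' :=
          Finset.inf'_le _ hb''
        simp only [hw'def, if_pos rfl, if_neg h]
        linarith
    -- transfer to x
    have hx' : c x b - w' b = B.inf' hB (fun b' => c x b' - w' b') :=
      (hP ϱ hϱ x hx (r ϱ) (hr ϱ hϱ) w' hw' b hb).mpr hr'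
    have key : ∀ b'' ∈ B, c x b - w' b ≤ c x b'' - w' b'' := by
      intro b'' hb''
      rw [hx']
      exact Finset.inf'_le _ hb''
    have hfx : c x b - w b - δ ≤ f x := by
      refine Finset.le_inf' _ _ ?_
      intro b'' hb''
      have := key b'' hb''
      by_cases h : b'' = b
      · subst h
        simp only [hw'def, if_pos rfl] at this ⊢
        linarith
      · simp only [hw'def, if_pos rfl, if_neg h] at this
        linarith
    linarith
  -- lower bound for any plan
  have lower : ∫ x, f x ∂μ ≤ ∑ b ∈ B, ∫ x, (c x b - w b) ∂(τ' b) := by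
    have h1 : ∫ x, f x ∂μ = ∑ b ∈ B, ∫ x, f x ∂(τ' b) := by
      rw [← hτ'sum]
      exact integral_finset_sum_measure fun b hb => hInt _ (hleμ τ' hτ'sum b hb) _ hfc
    rw [h1]
    refine Finset.sum_le_sum fun b hb => ?_
    haveI := hfin (τ' b) (hleμ τ' hτ'sum b hb)
    refine integral_mono (hInt _ (hleμ τ' hτ'sum b hb) _ hfc)
      ((hInt _ (hleμ τ' hτ'sum b hb) _ (hcb b)).sub (integrable_const _)) fun x => ?_
    exact Finset.inf'_le _ hb
  -- upper bound for τ, per b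
  have hcov : ⋃ ϱ ∈ P, ϱ = Set.univ := by
    rw [← hPcover, Set.sUnion_eq_biUnion]
    rfl
  have hPdisj' : Set.Pairwise (↑P) (Function.onFun Disjoint (id : Set (EuclideanSpace ℝ (Fin d)) → _)) :=
    fun ϱ₁ h1 ϱ₂ h2 hne => hPdisj ϱ₁ h1 ϱ₂ h2 hne
  have upper : ∀ b ∈ B, ∫ x, (c x b - w b) ∂(τ b) ≤ ∫ x, (f x + δ) ∂(τ b) := by
    intro b hb
    have hintg := hInt (τ b) (hleμ τ hτsum b hb) (fun x => c x b - w b)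
      ((hcb b).sub continuous_const)
    have hintf := hInt (τ b) (hleμ τ hτsum b hb) (fun x => f x + δ)
      (hfc.add continuous_const)
    calc ∫ x, (c x b - w b) ∂(τ b)
        = ∑ ϱ ∈ P, ∫ x in ϱ, (c x b - w b) ∂(τ b) := by
          rw [← integral_biUnion_finset P (fun ϱ h => hPmeas ϱ h) hPdisj'
            (fun ϱ _ => hintg.integrableOn), hcov, Measure.restrict_univ]
      _ ≤ ∑ ϱ ∈ P, ∫ x in ϱ, (f x + δ) ∂(τ b) := by
          refine Finset.sum_le_sum fun ϱ hϱ => ?_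
          by_cases h0 : τ b ϱ = 0
          · rw [Measure.restrict_eq_zero.mpr h0]
            simp
          · refine setIntegral_mono_on hintg.integrableOn hintf.integrableOn
              (hPmeas ϱ hϱ) fun x hx => ?_
            have := stepB ϱ hϱ b hb h0 x hx
            linarith
      _ = ∫ x, (f x + δ) ∂(τ b) := by
          rw [← integral_biUnion_finset P (fun ϱ h => hPmeas ϱ h) hPdisj'
            (fun ϱ _ => hintf.integrableOn), hcov, Measure.restrict_univ]
  have sum_upper : ∑ b ∈ B, ∫ x, (c x b - w b) ∂(τ b) ≤ ∫ x, f x ∂μ + δ := by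
    calc ∑ b ∈ B, ∫ x, (c x b - w b) ∂(τ b)
        ≤ ∑ b ∈ B, ∫ x, (f x + δ) ∂(τ b) := Finset.sum_le_sum upper
      _ = ∫ x, (f x + δ) ∂μ := by
          rw [← hτsum]
          exact (integral_finset_sum_measure fun b hb =>
            hInt _ (hleμ τ hτsum b hb) (fun x => f x + δ) (hfc.add continuous_const)).symm
      _ = ∫ x, f x ∂μ + δ := by
          rw [integral_add (hInt μ le_rfl f hfc) (integrable_const δ), integral_const]
          simp
  rw [decomp τ hτsum hτν, decomp τ' hτ'sum hτ'ν]
  linarith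
end
end

section
/- Let μ be a compactly supported Borel probability measure on ℝ^d, let B ⊂ ℝ^d be a finite set, let ν be a probability distribution on B, let c : ℝ^d × ℝ^d → ℝ≥0 be a continuous ground cost, and let δ > 0. Let P be a finite measurable partition of ℝ^d, with a representative point r(ϱ) ∈ ϱ in each part ϱ, such that for every part ϱ, any two points x, y ∈ ϱ have the same weighted nearest neighbors with respect to every weight function w : B → ℝ whose values are nonnegative integer multiples of δ. Let y : B → ℝ be dual weights whose values are nonnegative integer multiples of δ, and for each part ϱ define y_δ(r(ϱ)) = max_{b'∈B}( y(b') − c(r(ϱ), b') ) − δ. Suppose τ is a transport plan from μ to ν that is δ-optimal with respect to y, i.e., for every part ϱ ∈ P and every b ∈ B: y(b) − y_δ(r(ϱ)) ≤ c(r(ϱ), b) + δ, and y(b) − y_δ(r(ϱ)) ≥ c(r(ϱ), b) whenever τ_b(ϱ) > 0. Then for every transport plan τ' from μ to ν, ¢(τ) ≤ ¢(τ') + δ. -/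
open MeasureTheory
open scoped ENNReal

noncomputable section

/-- A `δ`-optimal transport plan (with respect to dual weights `y` on `B` and the induced
dual weights `y_δ(r ϱ) = max_{b'}(y b' - c (r ϱ) b') - δ` on the representatives of the
parts of the arrangement `P`) is `δ`-close: `¢(τ) ≤ ¢(τ') + δ` for every plan `τ'`. -/
theorem delta_optimal_plan_is_delta_close {d : ℕ}
    (μ : Measure (EuclideanSpace ℝ (Fin d))) [IsProbabilityMeasure μ]
    (hμc : ∃ K : Set (EuclideanSpace ℝ (Fin d)), IsCompact K ∧ μ Kᶜ = 0)
    (B : Finset (EuclideanSpace ℝ (Fin d))) (hB : B.Nonempty)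
    (ν : EuclideanSpace ℝ (Fin d) → ℝ≥0∞) (hν : ∑ b ∈ B, ν b = 1)
    (c : EuclideanSpace ℝ (Fin d) → EuclideanSpace ℝ (Fin d) → ℝ)
    (hc0 : ∀ x y, 0 ≤ c x y)
    (hccont : Continuous fun p : EuclideanSpace ℝ (Fin d) × EuclideanSpace ℝ (Fin d) =>
      c p.1 p.2)
    (δ : ℝ) (hδ : 0 < δ)
    -- `P` is a finite measurable partition of `ℝ^d`:
    (P : Finset (Set (EuclideanSpace ℝ (Fin d))))
    (hPmeas : ∀ ϱ ∈ P, MeasurableSet ϱ)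
    (hPdisj : ∀ ϱ₁ ∈ P, ∀ ϱ₂ ∈ P, ϱ₁ ≠ ϱ₂ → Disjoint ϱ₁ ϱ₂)
    (hPcover : ⋃₀ (P : Set (Set (EuclideanSpace ℝ (Fin d)))) = Set.univ)
    -- representative points:
    (r : Set (EuclideanSpace ℝ (Fin d)) → EuclideanSpace ℝ (Fin d))
    (hr : ∀ ϱ ∈ P, r ϱ ∈ ϱ)
    -- any two points of a part have the same weighted nearest neighbors for every weight
    -- function whose values are nonnegative integer multiples of `δ`:
    (hP : ∀ ϱ ∈ P, ∀ x ∈ ϱ, ∀ y' ∈ ϱ,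
      ∀ w : EuclideanSpace ℝ (Fin d) → ℝ,
        (∀ b ∈ B, ∃ k : ℕ, w b = (k : ℝ) * δ) → ∀ b ∈ B,
          (c x b - w b = B.inf' hB (fun b' => c x b' - w b') ↔
           c y' b - w b = B.inf' hB (fun b' => c y' b' - w b')))
    -- the dual weights on `B`:
    (y : EuclideanSpace ℝ (Fin d) → ℝ)
    (hy : ∀ b ∈ B, ∃ k : ℕ, y b = (k : ℝ) * δ)
    -- the transport plan, `δ`-optimal with respect to `y` and the induced duals
    -- `y_δ(r ϱ) = max_{b' ∈ B} (y b' - c (r ϱ) b') - δ`: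
    (τ : EuclideanSpace ℝ (Fin d) → Measure (EuclideanSpace ℝ (Fin d)))
    (hτ : IsSemiDiscretePlan μ B ν τ)
    (hfeas : ∀ ϱ ∈ P, ∀ b ∈ B,
      y b - (B.sup' hB (fun b' => y b' - c (r ϱ) b') - δ) ≤ c (r ϱ) b + δ)
    (htight : ∀ ϱ ∈ P, ∀ b ∈ B, τ b ϱ ≠ 0 →
      y b - (B.sup' hB (fun b' => y b' - c (r ϱ) b') - δ) ≥ c (r ϱ) b) :
    ∀ τ' : EuclideanSpace ℝ (Fin d) → Measure (EuclideanSpace ℝ (Fin d)),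
      IsSemiDiscretePlan μ B ν τ' → planCost c B τ ≤ planCost c B τ' + δ := by
  classical
  obtain ⟨K, hK, hKμ⟩ := hμc
  obtain ⟨hτsum, hτmass⟩ := hτ
  set φ : EuclideanSpace ℝ (Fin d) → ℝ :=
    fun x => B.inf' hB (fun b' => c x b' - y b') with hφdef
  have hcb_cont : ∀ b : EuclideanSpace ℝ (Fin d), Continuous fun x => c x b := by
    intro b
    exact hccont.comp (continuous_id.prodMk continuous_const)
  have hφcont : Continuous φ :=
    Continuous.finset_inf'_apply hB (fun b' _ => (hcb_cont b').sub continuous_const)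
  -- any measure dominated by μ is finite and supported in K; continuous functions are integrable
  have key_int : ∀ m : Measure (EuclideanSpace ℝ (Fin d)), m ≤ μ →
      ∀ f : EuclideanSpace ℝ (Fin d) → ℝ, Continuous f → Integrable f m := by
    intro m hm f hf
    have hfin : IsFiniteMeasure m := isFiniteMeasure_of_le μ hm
    obtain ⟨C, hC⟩ := hK.exists_bound_of_continuousOn hf.continuousOn
    have hmK : m Kᶜ = 0 := le_antisymm (le_trans (Measure.le_iff'.1 hm Kᶜ) hKμ.le) zero_le
    have hae : ∀ᵐ x ∂m, x ∈ K := by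
      rw [ae_iff]
      exact hmK
    exact (integrable_const C).mono' hf.aestronglyMeasurable
      (hae.mono fun x hx => hC x hx)
  have domle : ∀ σ : EuclideanSpace ℝ (Fin d) → Measure (EuclideanSpace ℝ (Fin d)),
      (∑ b ∈ B, σ b) = μ → ∀ b ∈ B, σ b ≤ μ := by
    intro σ hσ b hb
    rw [Measure.le_iff']
    intro s
    rw [← hσ, Measure.finset_sum_apply]
    exact Finset.single_le_sum (f := fun b => σ b s) (fun _ _ => zero_le) hb
  have hτle := domle τ hτsum
  -- the key pointwise inequality on parts carrying mass of `τ b`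
  have key : ∀ b ∈ B, ∀ ϱ ∈ P, τ b ϱ ≠ 0 → ∀ x ∈ ϱ, c x b ≤ φ x + (y b + δ) := by
    intro b hb ϱ hϱ hτϱ x hx
    set w : EuclideanSpace ℝ (Fin d) → ℝ := fun b' => if b' = b then y b' + δ else y b'
      with hwdef
    have hwmul : ∀ b' ∈ B, ∃ k : ℕ, w b' = (k : ℝ) * δ := by
      intro b' hb'
      obtain ⟨k, hk⟩ := hy b' hb'
      by_cases h : b' = b
      · exact ⟨k + 1, by simp only [hwdef, if_pos h, hk]; push_cast; ring⟩
      · exact ⟨k, by simp only [hwdef, if_neg h, hk]⟩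
    have htb := htight ϱ hϱ b hb hτϱ
    have hkey : ∀ b' ∈ B, c (r ϱ) b - w b ≤ c (r ϱ) b' - w b' := by
      intro b' hb'
      by_cases h : b' = b
      · subst h; exact le_rfl
      · have h2 := Finset.le_sup' (fun b' => y b' - c (r ϱ) b') hb'
        simp only [hwdef, if_pos rfl, if_neg h]
        linarith
    have hWNNr : c (r ϱ) b - w b = B.inf' hB (fun b' => c (r ϱ) b' - w b') :=
      le_antisymm (Finset.le_inf' hB _ hkey) (Finset.inf'_le _ hb)
    have hWNNx := (hP ϱ hϱ (r ϱ) (hr ϱ hϱ) x hx w hwmul b hb).mp hWNNr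
    have hbound : ∀ b' ∈ B, c x b - y b - δ ≤ c x b' - y b' := by
      intro b' hb'
      have h1 : c x b - w b ≤ c x b' - w b' := hWNNx ▸ Finset.inf'_le _ hb'
      by_cases h : b' = b
      · subst h; linarith
      · simp only [hwdef, if_pos rfl, if_neg h] at h1
        linarith
    have h2 : c x b - y b - δ ≤ φ x := Finset.le_inf' hB _ hbound
    linarith
  -- a.e. version
  have haebound : ∀ b ∈ B, ∀ᵐ x ∂(τ b), c x b ≤ φ x + (y b + δ) := by
    intro b hb
    rw [ae_iff]
    have hzero : (τ b) (⋃ ϱ ∈ P.filter (fun ϱ => τ b ϱ = 0), ϱ) = 0 := by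
      refine le_antisymm ((measure_biUnion_finset_le _ _).trans_eq ?_) zero_le
      exact Finset.sum_eq_zero fun ϱ hϱ => (Finset.mem_filter.mp hϱ).2
    refine measure_mono_null (fun x hx => ?_) hzero
    have hxU : x ∈ ⋃₀ (P : Set (Set (EuclideanSpace ℝ (Fin d)))) := by
      rw [hPcover]; exact Set.mem_univ x
    obtain ⟨ϱ, hϱP, hxϱ⟩ := hxU
    have hϱP' : ϱ ∈ P := hϱP
    by_cases hτϱ : τ b ϱ = 0
    · exact Set.mem_biUnion (Finset.mem_filter.mpr ⟨hϱP', hτϱ⟩) hxϱ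
    · exact absurd (key b hb ϱ hϱP' hτϱ x hxϱ) hx
  -- mass facts about ν
  have hνfin : ∀ b ∈ B, ν b ≠ ∞ := by
    intro b hb
    have : ν b ≤ 1 := hν ▸ Finset.single_le_sum (fun _ _ => zero_le) hb
    exact (this.trans_lt ENNReal.one_lt_top).ne
  have hν1 : ∑ b ∈ B, (ν b).toReal = 1 := by
    rw [← ENNReal.toReal_sum hνfin, hν, ENNReal.toReal_one]
  intro τ' hτ'
  obtain ⟨hτ'sum, hτ'mass⟩ := hτ'
  have hτ'le := domle τ' hτ'sum
  -- integrability
  have hφτ : ∀ b ∈ B, Integrable φ (τ b) := fun b hb => key_int _ (hτle b hb) _ hφcont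
  have hφτ' : ∀ b ∈ B, Integrable φ (τ' b) := fun b hb => key_int _ (hτ'le b hb) _ hφcont
  have hcτ : ∀ b ∈ B, Integrable (fun x => c x b) (τ b) :=
    fun b hb => key_int _ (hτle b hb) _ (hcb_cont b)
  have hcτ' : ∀ b ∈ B, Integrable (fun x => c x b) (τ' b) :=
    fun b hb => key_int _ (hτ'le b hb) _ (hcb_cont b)
  -- the dual lower/upper bounds
  have hμφ : ∫ x, φ x ∂μ = ∑ b ∈ B, ∫ x, φ x ∂(τ b) := by
    rw [← hτsum]
    exact integral_finset_sum_measure (fun b hb => hφτ b hb)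
  have hμφ' : ∫ x, φ x ∂μ = ∑ b ∈ B, ∫ x, φ x ∂(τ' b) := by
    rw [← hτ'sum]
    exact integral_finset_sum_measure (fun b hb => hφτ' b hb)
  have hupper : planCost c B τ ≤ ∫ x, φ x ∂μ + ∑ b ∈ B, (y b + δ) * (ν b).toReal := by
    rw [hμφ, ← Finset.sum_add_distrib]
    refine Finset.sum_le_sum fun b hb => ?_
    have : IsFiniteMeasure (τ b) := isFiniteMeasure_of_le μ (hτle b hb)
    have h1 : ∫ x, c x b ∂(τ b) ≤ ∫ x, φ x + (y b + δ) ∂(τ b) :=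
      integral_mono_ae (hcτ b hb) ((hφτ b hb).add (integrable_const _)) (haebound b hb)
    rw [integral_add (hφτ b hb) (integrable_const _), integral_const, measureReal_def, hτmass b hb,
      smul_eq_mul, mul_comm] at h1
    exact h1
  have hlower : ∫ x, φ x ∂μ + ∑ b ∈ B, y b * (ν b).toReal ≤ planCost c B τ' := by
    rw [hμφ', ← Finset.sum_add_distrib]
    refine Finset.sum_le_sum fun b hb => ?_
    have : IsFiniteMeasure (τ' b) := isFiniteMeasure_of_le μ (hτ'le b hb)
    have h1 : ∫ x, φ x + y b ∂(τ' b) ≤ ∫ x, c x b ∂(τ' b) := by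
      refine integral_mono ((hφτ' b hb).add (integrable_const _)) (hcτ' b hb) fun x => ?_
      have := Finset.inf'_le (fun b' => c x b' - y b') hb
      simp only [hφdef]
      linarith
    rw [integral_add (hφτ' b hb) (integrable_const _), integral_const, measureReal_def, hτ'mass b hb,
      smul_eq_mul, mul_comm] at h1
    exact h1
  have hsplit : ∑ b ∈ B, (y b + δ) * (ν b).toReal
      = (∑ b ∈ B, y b * (ν b).toReal) + δ := by
    calc ∑ b ∈ B, (y b + δ) * (ν b).toReal
        = ∑ b ∈ B, (y b * (ν b).toReal + δ * (ν b).toReal) := by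
          refine Finset.sum_congr rfl fun b _ => ?_; ring
      _ = (∑ b ∈ B, y b * (ν b).toReal) + δ * ∑ b ∈ B, (ν b).toReal := by
          rw [Finset.sum_add_distrib, Finset.mul_sum]
      _ = (∑ b ∈ B, y b * (ν b).toReal) + δ := by rw [hν1, mul_one]
  linarith

end
end

section
/- Let B ⊂ ℝ^d be a finite set, let c : ℝ^d × ℝ^d → ℝ≥0 be a ground cost, let δ > 0, and let y : B → ℝ be dual weights whose values are nonnegative integer multiples of 2δ. Let a₁, a₂ ∈ ℝ^d be such that for every weight function w : B → ℝ with values nonnegative integer multiples of 2δ and every b ∈ B, b is a weighted nearest neighbor of a₁ with respect to w if and only if b is a weighted nearest neighbor of a₂ with respect to w. Define y_{2δ}(a₂) = max_{b'∈B}( y(b') − c(a₂, b') ) − 2δ, and for b ∈ B define the slack s_δ(a₁, b) = ⌊( c_y(a₁,b) − min_{b'∈B} c_y(a₁,b') ) / δ⌋ · δ, where c_y(x,b) = c(x,b) − y(b). If b ∈ B satisfies c(a₂, b) ≤ y(b) − y_{2δ}(a₂), then s_δ(a₁, b) ≤ 4δ. -/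
noncomputable section

/-- If `a₁` and `a₂` lie in the same cell of the arrangement of all weighted Voronoi
diagrams over weight vectors with values nonnegative integer multiples of `2δ`, the dual
weights `y` take values nonnegative integer multiples of `2δ`, and `b` satisfies the
`2δ`-optimality condition `c(a₂,b) ≤ y(b) - y_{2δ}(a₂)` where
`y_{2δ}(a₂) = max_{b'}(y b' - c a₂ b') - 2δ`, then the slack
`s_δ(a₁,b) = ⌊(c_y(a₁,b) - min_{b'} c_y(a₁,b'))/δ⌋·δ` is at most `4δ`. -/
theorem slack_le_four_delta {d : ℕ}
    (B : Finset (EuclideanSpace ℝ (Fin d))) (hB : B.Nonempty)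
    (c : EuclideanSpace ℝ (Fin d) → EuclideanSpace ℝ (Fin d) → ℝ)
    (hc0 : ∀ x y, 0 ≤ c x y)
    (δ : ℝ) (hδ : 0 < δ)
    (y : EuclideanSpace ℝ (Fin d) → ℝ)
    (hy : ∀ b ∈ B, ∃ k : ℕ, y b = (k : ℝ) * (2 * δ))
    (a₁ a₂ : EuclideanSpace ℝ (Fin d))
    (hcell : ∀ w : EuclideanSpace ℝ (Fin d) → ℝ,
      (∀ b ∈ B, ∃ k : ℕ, w b = (k : ℝ) * (2 * δ)) → ∀ b ∈ B,
        (c a₁ b - w b = B.inf' hB (fun b' => c a₁ b' - w b') ↔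
         c a₂ b - w b = B.inf' hB (fun b' => c a₂ b' - w b')))
    (b : EuclideanSpace ℝ (Fin d)) (hb : b ∈ B)
    (hopt : c a₂ b ≤ y b - (B.sup' hB (fun b' => y b' - c a₂ b') - 2 * δ)) :
    (⌊((c a₁ b - y b) - B.inf' hB (fun b' => c a₁ b' - y b')) / δ⌋ : ℝ) * δ ≤ 4 * δ := by
  classical
  set w : EuclideanSpace ℝ (Fin d) → ℝ := fun x => if x = b then y b + 2 * δ else y x with hw
  have hwmult : ∀ b' ∈ B, ∃ k : ℕ, w b' = (k : ℝ) * (2 * δ) := by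
    intro b' hb'
    by_cases h : b' = b
    · obtain ⟨k, hk⟩ := hy b hb
      exact ⟨k + 1, by simp [hw, h, hk]; push_cast; ring⟩
    · obtain ⟨k, hk⟩ := hy b' hb'
      exact ⟨k, by simp [hw, h, hk]⟩
  have key : ∀ b' ∈ B, c a₂ b - y b - 2 * δ ≤ c a₂ b' - y b' := by
    intro b' hb'
    have h1 : y b' - c a₂ b' ≤ B.sup' hB (fun b' => y b' - c a₂ b') :=
      Finset.le_sup' (fun b' => y b' - c a₂ b') hb'
    linarith
  have hwnn2 : c a₂ b - w b = B.inf' hB (fun b' => c a₂ b' - w b') := by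
    apply le_antisymm
    · apply Finset.le_inf'
      intro b' hb'
      by_cases h : b' = b
      · simp [hw, h]
      · have := key b' hb'
        simp only [hw, h, if_false, if_true, if_pos rfl]
        linarith
    · exact Finset.inf'_le _ hb
  have hwnn1 : c a₁ b - w b = B.inf' hB (fun b' => c a₁ b' - w b') :=
    (hcell w hwmult b hb).mpr hwnn2
  -- bound the slack at a₁ by 2δ
  obtain ⟨b₀, hb₀, hmin⟩ := Finset.exists_mem_eq_inf' hB (fun b' => c a₁ b' - y b')
  have hmw_le : B.inf' hB (fun b' => c a₁ b' - w b') ≤ c a₁ b₀ - w b₀ :=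
    Finset.inf'_le _ hb₀
  have hs₁ : (c a₁ b - y b) - B.inf' hB (fun b' => c a₁ b' - y b') ≤ 2 * δ := by
    rw [hmin]
    by_cases h : b₀ = b
    · subst h; linarith
    · have hwb₀ : w b₀ = y b₀ := by simp [hw, h]
      have hwb : w b = y b + 2 * δ := by simp [hw]
      rw [hwb] at hwnn1
      rw [hwb₀] at hmw_le
      linarith
  have hfl : (⌊((c a₁ b - y b) - B.inf' hB (fun b' => c a₁ b' - y b')) / δ⌋ : ℝ) * δ
      ≤ (c a₁ b - y b) - B.inf' hB (fun b' => c a₁ b' - y b') := by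
    have h1 := Int.floor_le (((c a₁ b - y b) - B.inf' hB (fun b' => c a₁ b' - y b')) / δ)
    calc (⌊((c a₁ b - y b) - B.inf' hB (fun b' => c a₁ b' - y b')) / δ⌋ : ℝ) * δ
        ≤ (((c a₁ b - y b) - B.inf' hB (fun b' => c a₁ b' - y b')) / δ) * δ :=
          mul_le_mul_of_nonneg_right h1 hδ.le
      _ = (c a₁ b - y b) - B.inf' hB (fun b' => c a₁ b' - y b') :=
          div_mul_cancel₀ _ hδ.ne'
  linarith

end
end

section
/- Let B ⊂ ℝ^d be a finite set, let c : ℝ^d × ℝ^d → ℝ≥0 be a ground cost, and let δ > 0. Let a₁, a₂ ∈ ℝ^d be such that for every weight function w : B → ℝ whose values are nonnegative integer multiples of 2δ and every b ∈ B, b is a weighted nearest neighbor of a₁ with respect to w if and only if b is a weighted nearest neighbor of a₂ with respect to w. Then for every pair of points b₁, b₂ ∈ B, ⌊( c(a₁,b₁) − c(a₁,b₂) ) / δ⌋ · δ ≤ ⌊( c(a₂,b₁) − c(a₂,b₂) ) / δ⌋ · δ + 2δ. -/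
noncomputable section

/-- If `a₁` and `a₂` lie in the same cell of the arrangement of all weighted Voronoi
diagrams over weight vectors with values nonnegative integer multiples of `2δ`, then for any
`b₁, b₂ ∈ B`,
`⌊(c(a₁,b₁) - c(a₁,b₂))/δ⌋·δ ≤ ⌊(c(a₂,b₁) - c(a₂,b₂))/δ⌋·δ + 2δ`. -/
theorem floor_distance_difference {d : ℕ}
    (B : Finset (EuclideanSpace ℝ (Fin d))) (hB : B.Nonempty)
    (c : EuclideanSpace ℝ (Fin d) → EuclideanSpace ℝ (Fin d) → ℝ)
    (hc0 : ∀ x y, 0 ≤ c x y)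
    (δ : ℝ) (hδ : 0 < δ)
    (a₁ a₂ : EuclideanSpace ℝ (Fin d))
    (hcell : ∀ w : EuclideanSpace ℝ (Fin d) → ℝ,
      (∀ b ∈ B, ∃ k : ℕ, w b = (k : ℝ) * (2 * δ)) → ∀ b ∈ B,
        (c a₁ b - w b = B.inf' hB (fun b' => c a₁ b' - w b') ↔
         c a₂ b - w b = B.inf' hB (fun b' => c a₂ b' - w b'))) :
    ∀ b₁ ∈ B, ∀ b₂ ∈ B,
      (⌊(c a₁ b₁ - c a₁ b₂) / δ⌋ : ℝ) * δ ≤ (⌊(c a₂ b₁ - c a₂ b₂) / δ⌋ : ℝ) * δ + 2 * δ := by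
  classical
  intro b₁ hb₁ b₂ hb₂
  have h2δ : (0:ℝ) < 2 * δ := by linarith
  by_cases hbe : b₁ = b₂
  · subst hbe
    simp only [sub_self, zero_div, Int.floor_zero, Int.cast_zero, zero_mul]
    linarith
  -- key quantities
  set d₁ : ℝ := c a₁ b₁ - c a₁ b₂ with hd₁
  set d₂ : ℝ := c a₂ b₁ - c a₂ b₂ with hd₂
  set k : ℤ := ⌈d₂ / (2 * δ)⌉ with hk
  obtain ⟨N, hN⟩ := exists_nat_gt (max ((max (c a₁ b₂) (c a₂ b₂)) / (2 * δ)) (-(k:ℝ)))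
  have hN1 : c a₁ b₂ < (N : ℝ) * (2 * δ) := by
    have h1 : (max (c a₁ b₂) (c a₂ b₂)) / (2 * δ) < (N : ℝ) := lt_of_le_of_lt (le_max_left _ _) hN
    have := (div_lt_iff₀ h2δ).mp h1
    have := le_max_left (c a₁ b₂) (c a₂ b₂)
    linarith
  have hN2 : c a₂ b₂ < (N : ℝ) * (2 * δ) := by
    have h1 : (max (c a₁ b₂) (c a₂ b₂)) / (2 * δ) < (N : ℝ) := lt_of_le_of_lt (le_max_left _ _) hN
    have := (div_lt_iff₀ h2δ).mp h1
    have := le_max_right (c a₁ b₂) (c a₂ b₂)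
    linarith
  have hNk : (0:ℝ) ≤ (N : ℝ) + (k : ℝ) := by
    have : -(k:ℝ) < (N:ℝ) := lt_of_le_of_lt (le_max_right _ _) hN
    linarith
  have hNkZ : (0:ℤ) ≤ (N : ℤ) + k := by exact_mod_cast hNk
  -- the weight function
  set w : EuclideanSpace ℝ (Fin d) → ℝ :=
    fun b => if b = b₁ then ((N : ℝ) + (k : ℝ)) * (2 * δ)
             else if b = b₂ then (N : ℝ) * (2 * δ) else 0 with hw
  have hwb₁ : w b₁ = ((N : ℝ) + (k : ℝ)) * (2 * δ) := by simp [hw]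
  have hwb₂ : w b₂ = (N : ℝ) * (2 * δ) := by
    simp [hw, Ne.symm hbe]
  have hwvalid : ∀ b ∈ B, ∃ m : ℕ, w b = (m : ℝ) * (2 * δ) := by
    intro b _
    by_cases h1 : b = b₁
    · refine ⟨((N : ℤ) + k).toNat, ?_⟩
      have : ((((N : ℤ) + k).toNat : ℤ) : ℝ) = (N : ℝ) + (k : ℝ) := by
        rw [Int.toNat_of_nonneg hNkZ]; push_cast; ring
      rw [h1, hwb₁, ← this]
      norm_cast
    · by_cases h2 : b = b₂
      · exact ⟨N, by rw [h2, hwb₂]⟩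
      · exact ⟨0, by simp [hw, h1, h2]⟩
  -- key characterization of b₁ being a WNN
  have key : ∀ a : EuclideanSpace ℝ (Fin d), c a b₂ < (N : ℝ) * (2 * δ) →
      ((c a b₁ - w b₁ = B.inf' hB (fun b' => c a b' - w b')) ↔
        c a b₁ - c a b₂ ≤ (k : ℝ) * (2 * δ)) := by
    intro a ha
    constructor
    · intro h
      have hle : B.inf' hB (fun b' => c a b' - w b') ≤ c a b₂ - w b₂ :=
        Finset.inf'_le _ hb₂
      rw [← h] at hle
      rw [hwb₁, hwb₂] at hle
      nlinarith
    · intro h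
      refine le_antisymm ?_ (Finset.inf'_le _ hb₁)
      apply Finset.le_inf'
      intro b hb
      by_cases h1 : b = b₁
      · rw [h1]
      · by_cases h2 : b = b₂
        · rw [h2, hwb₁, hwb₂]; nlinarith
        · have hwb : w b = 0 := by simp [hw, h1, h2]
          rw [hwb, hwb₁]
          have h0 : 0 ≤ c a b := hc0 a b
          have hcb2 : c a b₂ - (N:ℝ) * (2*δ) < 0 := by linarith
          nlinarith
  -- d₂ ≤ k * 2δ by definition of ceiling
  have hd2k : d₂ ≤ (k : ℝ) * (2 * δ) := by
    have := Int.le_ceil (d₂ / (2 * δ))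
    calc d₂ = (d₂ / (2 * δ)) * (2 * δ) := by field_simp
    _ ≤ (k : ℝ) * (2 * δ) := by
        apply mul_le_mul_of_nonneg_right _ h2δ.le
        exact_mod_cast this
  -- b₁ is a WNN of a₂
  have h2 : c a₂ b₁ - w b₁ = B.inf' hB (fun b' => c a₂ b' - w b') :=
    (key a₂ hN2).2 hd2k
  have h1 : c a₁ b₁ - w b₁ = B.inf' hB (fun b' => c a₁ b' - w b') :=
    (hcell w hwvalid b₁ hb₁).2 h2
  have hd1k : d₁ ≤ (k : ℝ) * (2 * δ) := (key a₁ hN1).1 h1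
  -- k * 2δ < d₂ + 2δ
  have hklt : (k : ℝ) * (2 * δ) < d₂ + 2 * δ := by
    have h := Int.ceil_lt_add_one (d₂ / (2 * δ))
    have : (k : ℝ) < d₂ / (2 * δ) + 1 := h
    have h' := (mul_lt_mul_of_pos_right this h2δ)
    have : (d₂ / (2 * δ) + 1) * (2 * δ) = d₂ + 2 * δ := by field_simp
    linarith
  -- conclude
  have hlt : d₁ < d₂ + 2 * δ := lt_of_le_of_lt hd1k hklt
  have hdiv : d₁ / δ ≤ d₂ / δ + 2 := by
    rw [div_le_iff₀ hδ]
    have h2 : (d₂ / δ) * δ = d₂ := div_mul_cancel₀ _ hδ.ne'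
    nlinarith
  have hfloor : ⌊d₁ / δ⌋ ≤ ⌊d₂ / δ⌋ + 2 := by
    have := Int.floor_le_floor hdiv
    rwa [show (2:ℝ) = ((2:ℤ):ℝ) by norm_num, Int.floor_add_intCast] at this
  have hfloorR : (⌊d₁ / δ⌋ : ℝ) ≤ (⌊d₂ / δ⌋ : ℝ) + 2 := by exact_mod_cast hfloor
  nlinarith [mul_le_mul_of_nonneg_right hfloorR hδ.le]

end
end

section
/- Let X and B be disjoint finite sets and let σ₁, σ₂ : X × B → ℝ≥0 be two functions with identical marginals, i.e., Σ_{b∈B} σ₁(r,b) = Σ_{b∈B} σ₂(r,b) for every r ∈ X, and Σ_{r∈X} σ₁(r,b) = Σ_{r∈X} σ₂(r,b) for every b ∈ B. Define the residual digraph G on the vertex set X ∪ B as follows: for each pair (r,b) ∈ X × B, if σ₁(r,b) > σ₂(r,b) there is a directed edge from b to r, and if σ₁(r,b) < σ₂(r,b) there is a directed edge from r to b. Then every directed edge of G is contained in a simple directed cycle of G. -/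
/-- The residual digraph of two transport plans `σ₁, σ₂ : X × B → ℝ≥0` on the vertex set
`X ⊕ B`: there is an edge from `b` to `r` when `σ₁(r,b) > σ₂(r,b)` and an edge from `r` to
`b` when `σ₁(r,b) < σ₂(r,b)`. -/
def residualAdj {X B : Type*} (σ₁ σ₂ : X → B → ℝ) : X ⊕ B → X ⊕ B → Prop
  | Sum.inr b, Sum.inl r => σ₂ r b < σ₁ r b
  | Sum.inl r, Sum.inr b => σ₁ r b < σ₂ r b
  | _, _ => False

section Aux

open List

variable {α : Type*}

/-- A duplicate element splits the list into three parts. -/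
lemma dup_split {x : α} : ∀ {l : List α}, List.Duplicate x l →
    ∃ l1 l2 l3 : List α, l = l1 ++ x :: l2 ++ x :: l3 := by
  classical
  intro l hl
  rw [List.duplicate_iff_two_le_count] at hl
  have hx : x ∈ l := List.count_pos_iff.mp (by omega)
  obtain ⟨s, t, rfl⟩ := List.append_of_mem hx
  have hc : 2 ≤ List.count x s + (List.count x (x :: t)) := by
    rw [← List.count_append]; exact hl
  simp only [List.count_cons_self] at hc
  by_cases ht : x ∈ t
  · obtain ⟨t1, t2, rfl⟩ := List.append_of_mem ht
    exact ⟨s, t1, t2, by simp⟩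
  · have : List.count x t = 0 := List.count_eq_zero_of_not_mem ht
    have hs : x ∈ s := List.count_pos_iff.mp (by omega)
    obtain ⟨s1, s2, rfl⟩ := List.append_of_mem hs
    exact ⟨s1, s2, t, by simp⟩

/-- Any chain can be shortened to a duplicate-free chain with the same endpoints. -/
lemma chain'_shorten (r : α → α → Prop) :
    ∀ (n : ℕ) (l : List α), l.length ≤ n → List.Chain' r l →
      ∃ l' : List α, List.Chain' r l' ∧ l'.Nodup ∧ l'.head? = l.head? ∧
        l'.getLast? = l.getLast? := by
  intro n
  induction n with
  | zero =>
    intro l hl _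
    have : l = [] := List.eq_nil_of_length_eq_zero (Nat.le_zero.mp hl)
    exact ⟨[], by simp [this]; exact List.isChain_nil⟩
  | succ n ih =>
    intro l hl hc
    by_cases hnd : l.Nodup
    · exact ⟨l, hc, hnd, rfl, rfl⟩
    · obtain ⟨x, hx⟩ := List.exists_duplicate_iff_not_nodup.mpr hnd
      obtain ⟨l1, l2, l3, rfl⟩ := dup_split hx
      -- shorten to l1 ++ x :: l3
      have h5 := (List.isChain_split (l₁ := l1 ++ x :: l2) (c := x) (l₂ := l3)).mp hc
      have h6 : List.Chain' r (l1 ++ x :: (l2 ++ [x])) := by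
        have := h5.1
        rwa [List.append_assoc, List.cons_append] at this
      have hc2 : List.Chain' r (x :: l3) := h5.2
      have hc3 : List.Chain' r (l1 ++ x :: l3) :=
        (List.isChain_split).mpr ⟨((List.isChain_split).mp h6).1, hc2⟩
      have hlen : (l1 ++ x :: l3).length ≤ n := by
        simp only [List.length_append, List.length_cons] at hl ⊢
        omega
      obtain ⟨l', h1, h2, h3, h4⟩ := ih (l1 ++ x :: l3) hlen hc3
      refine ⟨l', h1, h2, ?_, ?_⟩
      · rw [h3]; cases l1 <;> simp
      · rw [h4, List.getLast?_append_of_ne_nil l1 (by simp),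
          List.getLast?_append_of_ne_nil (l1 ++ (x :: l2)) (l₂ := x :: l3) (by simp)]

lemma exists_nodup_chain_of_reflTransGen {r : α → α → Prop} {a b : α}
    (h : Relation.ReflTransGen r a b) :
    ∃ l : List α, List.Chain r a l ∧ (a :: l).getLast? = some b ∧ (a :: l).Nodup := by
  obtain ⟨l, hc, hlast⟩ := List.exists_isChain_cons_of_relationReflTransGen h
  have hc' : List.Chain' r (a :: l) := hc
  obtain ⟨l', h1, h2, h3, h4⟩ := chain'_shorten r (a :: l).length (a :: l) le_rfl hc'
  simp only [List.head?_cons] at h3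
  obtain ⟨t, rfl⟩ : ∃ t, l' = a :: t := by
    cases l' with
    | nil => simp at h3
    | cons c t => exact ⟨t, by simp at h3; rw [h3]⟩
  refine ⟨t, h1, ?_, h2⟩
  rw [h4, List.getLast?_eq_getLast (List.cons_ne_nil _ _), hlast]

end Aux

section Flow

variable {X B : Type*} [Fintype X] [Fintype B] (σ₁ σ₂ : X → B → ℝ)

/-- The net flow along each potential edge. -/
def resFlow : X ⊕ B → X ⊕ B → ℝ
  | Sum.inr b, Sum.inl r => σ₁ r b - σ₂ r b
  | Sum.inl r, Sum.inr b => σ₂ r b - σ₁ r b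
  | _, _ => 0

lemma resFlow_skew (x y : X ⊕ B) : resFlow σ₁ σ₂ x y = - resFlow σ₁ σ₂ y x := by
  cases x <;> cases y <;> simp [resFlow] <;> ring

lemma residualAdj_iff (x y : X ⊕ B) :
    residualAdj σ₁ σ₂ x y ↔ 0 < resFlow σ₁ σ₂ x y := by
  cases x <;> cases y <;> simp [residualAdj, resFlow] <;> constructor <;> intro h <;> linarith

lemma resFlow_conserve
    (hrow : ∀ r : X, ∑ b : B, σ₁ r b = ∑ b : B, σ₂ r b)
    (hcol : ∀ b : B, ∑ r : X, σ₁ r b = ∑ r : X, σ₂ r b)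
    (x : X ⊕ B) : ∑ y : X ⊕ B, resFlow σ₁ σ₂ x y = 0 := by
  cases x with
  | inl r =>
    rw [Fintype.sum_sum_type]
    have h1 : ∑ r' : X, resFlow σ₁ σ₂ (Sum.inl r) (Sum.inl r') = 0 := by
      simp [resFlow]
    have h2 : ∑ b : B, resFlow σ₁ σ₂ (Sum.inl r) (Sum.inr b)
        = ∑ b : B, (σ₂ r b - σ₁ r b) := rfl
    rw [h1, h2, Finset.sum_sub_distrib, hrow r]
    ring
  | inr b =>
    rw [Fintype.sum_sum_type]
    have h1 : ∑ b' : B, resFlow σ₁ σ₂ (Sum.inr b) (Sum.inr b') = 0 := by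
      simp [resFlow]
    have h2 : ∑ r : X, resFlow σ₁ σ₂ (Sum.inr b) (Sum.inl r)
        = ∑ r : X, (σ₁ r b - σ₂ r b) := rfl
    rw [h1, h2, Finset.sum_sub_distrib, hcol b]
    ring

end Flow

/-- If `σ₁` and `σ₂` are two nonnegative functions on `X × B` with identical row and column
marginals, then every directed edge of their residual digraph is contained in a simple
directed cycle: there is a closed directed walk starting with that edge whose vertices are
pairwise distinct (except that it returns to its starting vertex). -/
theorem residual_edge_in_simple_cycle {X B : Type*} [Fintype X] [Fintype B]
    (σ₁ σ₂ : X → B → ℝ)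
    (h₁ : ∀ r b, 0 ≤ σ₁ r b) (h₂ : ∀ r b, 0 ≤ σ₂ r b)
    (hrow : ∀ r : X, ∑ b : B, σ₁ r b = ∑ b : B, σ₂ r b)
    (hcol : ∀ b : B, ∑ r : X, σ₁ r b = ∑ r : X, σ₂ r b) :
    ∀ u v : X ⊕ B, residualAdj σ₁ σ₂ u v →
      ∃ l : List (X ⊕ B),
        List.Chain (residualAdj σ₁ σ₂) u (v :: l ++ [u]) ∧ (u :: v :: l).Nodup := by
  classical
  intro u v huv
  set adj := residualAdj σ₁ σ₂ with hadj
  set F := resFlow σ₁ σ₂ with hF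
  -- u is reachable from v
  have hreach : Relation.ReflTransGen adj v u := by
    by_contra hnr
    set S : Finset (X ⊕ B) := Finset.univ.filter (fun x => Relation.ReflTransGen adj v x)
      with hS
    have hvS : v ∈ S := by simp only [hS, Finset.mem_filter, Finset.mem_univ, true_and]; exact Relation.ReflTransGen.refl
    have huS : u ∉ S := by simp [hS]; exact hnr
    have hclosed : ∀ x ∈ S, ∀ y, 0 < F x y → y ∈ S := by
      intro x hx y hy
      simp only [hS, Finset.mem_filter, Finset.mem_univ, true_and] at hx ⊢
      exact hx.tail ((residualAdj_iff σ₁ σ₂ x y).mpr hy)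
    -- total flow out of S
    have htot : ∑ x ∈ S, ∑ y : X ⊕ B, F x y = 0 := by
      apply Finset.sum_eq_zero
      intro x _
      exact resFlow_conserve σ₁ σ₂ hrow hcol x
    have hsplit : ∑ x ∈ S, ∑ y : X ⊕ B, F x y
        = (∑ x ∈ S, ∑ y ∈ S, F x y) + ∑ x ∈ S, ∑ y ∈ Sᶜ, F x y := by
      rw [← Finset.sum_add_distrib]
      apply Finset.sum_congr rfl
      intro x _
      rw [← Finset.sum_add_sum_compl S (F x)]
    have hinner : ∑ x ∈ S, ∑ y ∈ S, F x y = 0 := by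
      have : ∑ x ∈ S, ∑ y ∈ S, F x y = - ∑ x ∈ S, ∑ y ∈ S, F x y := by
        conv_lhs => rw [Finset.sum_comm]
        rw [← Finset.sum_neg_distrib]
        apply Finset.sum_congr rfl
        intro y _
        rw [← Finset.sum_neg_distrib]
        exact Finset.sum_congr rfl fun x _ => by rw [hF, resFlow_skew]
      linarith
    have hout : ∑ x ∈ S, ∑ y ∈ Sᶜ, F x y = 0 := by
      rw [hsplit, hinner] at htot; linarith
    -- but each term is ≤ 0 and the (v,u) term is < 0
    have hout' : ∑ p ∈ S ×ˢ Sᶜ, F p.1 p.2 = 0 := by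
      rw [Finset.sum_product]; exact hout
    have hneg : ∑ p ∈ S ×ˢ Sᶜ, F p.1 p.2 < ∑ p ∈ S ×ˢ Sᶜ, (0 : ℝ) := by
      apply Finset.sum_lt_sum
      · rintro ⟨x, y⟩ hp
        simp only [Finset.mem_product, Finset.mem_compl] at hp
        by_contra hpos
        push_neg at hpos
        exact hp.2 (hclosed x hp.1 y hpos)
      · refine ⟨(v, u), ?_, ?_⟩
        · simp only [Finset.mem_product, Finset.mem_compl]
          exact ⟨hvS, huS⟩
        · have : 0 < F u v := (residualAdj_iff σ₁ σ₂ u v).mp huv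
          have := resFlow_skew σ₁ σ₂ v u
          simp only [← hF] at this
          linarith
    rw [hout'] at hneg
    simp at hneg
  -- extract a nodup path from v to u
  obtain ⟨l, hc, hlast, hnd⟩ := exists_nodup_chain_of_reflTransGen hreach
  have hvu : v ≠ u := by
    intro h
    subst h
    cases v <;> exact huv
  -- l is nonempty and ends with u
  have hlne : l ≠ [] := by
    rintro rfl
    simp at hlast
    exact hvu hlast
  obtain ⟨m, c, rfl⟩ := (List.eq_nil_or_concat' l).resolve_left hlne
  have hcu : c = u := by
    have hl2 : (v :: (m ++ [c])).getLast? = some c := by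
      rw [show v :: (m ++ [c]) = (v :: m) ++ [c] by simp,
        List.getLast?_append_of_ne_nil _ (by simp)]
      rfl
    rw [hl2] at hlast
    exact Option.some_inj.mp hlast
  subst c
  refine ⟨m, ?_, ?_⟩
  · exact List.Chain.cons huv hc
  · -- Nodup (u :: v :: m) from Nodup (v :: m ++ [u])
    have h1 : (v :: (m ++ [u])).Nodup := hnd
    rw [show v :: (m ++ [u]) = (v :: m) ++ [u] by simp] at h1
    have h2 : (v :: m).Nodup := h1.of_append_left
    have h3 : u ∉ v :: m := fun hu => by
      have := List.disjoint_of_nodup_append h1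
      exact this hu (by simp)
    exact List.nodup_cons.mpr ⟨h3, h2⟩
end

section
/- Let X and B be finite sets with |B| = n, let c : X × B → ℝ≥0 be an edge cost function, and let μ̂ : X → ℝ≥0 and ν : B → ℝ≥0 be demands with Σ_{r∈X} μ̂(r) = Σ_{b∈B} ν(b). Suppose there exists a transport plan σ' from μ̂ to ν such that c(r,b) ≤ 4 whenever σ'(r,b) > 0. Then every minimum-cost transport plan σ* from μ̂ to ν satisfies: σ*(r,b) > 0 implies c(r,b) ≤ 4n, for all (r,b) ∈ X × B. -/
/-- A discrete transport plan from the demands `μ : X → ℝ≥0` to `ν : B → ℝ≥0`: a nonnegative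
function on `X × B` with row marginals `μ` and column marginals `ν`. -/
def IsDiscretePlan {X B : Type*} [Fintype X] [Fintype B]
    (μ : X → ℝ) (ν : B → ℝ) (σ : X → B → ℝ) : Prop :=
  (∀ r b, 0 ≤ σ r b) ∧ (∀ r : X, ∑ b : B, σ r b = μ r) ∧ (∀ b : B, ∑ r : X, σ r b = ν b)

open Finset

lemma cyclic_mono {X B : Type*} [Fintype X] [Fintype B]
    (c : X → B → ℝ)
    (μ : X → ℝ) (ν : B → ℝ)
    (σstar : X → B → ℝ) (hstar : IsDiscretePlan μ ν σstar)
    (hmin : ∀ σ : X → B → ℝ, IsDiscretePlan μ ν σ →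
      ∑ r : X, ∑ b : B, σstar r b * c r b ≤ ∑ r : X, ∑ b : B, σ r b * c r b)
    (k : ℕ) (r : Fin (k+1) → X) (b : Fin (k+1) → B)
    (hpos : ∀ i, 0 < σstar (r i) (b i)) :
    ∑ i, c (r i) (b i) ≤ ∑ i, c (r i) (b (i+1)) := by
  classical
  obtain ⟨hnn, hrow, hcol⟩ := hstar
  set m : ℝ := univ.inf' univ_nonempty (fun i : Fin (k+1) => σstar (r i) (b i)) with hm
  have hmle : ∀ i, m ≤ σstar (r i) (b i) := fun i => inf'_le _ (mem_univ i)
  have hmpos : 0 < m := by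
    obtain ⟨i, -, hi⟩ := exists_mem_eq_inf' (univ_nonempty) (fun i : Fin (k+1) => σstar (r i) (b i))
    rw [hm, hi]; exact hpos i
  set ε : ℝ := m / (k+1) with hε
  have hεpos : 0 < ε := div_pos hmpos (by positivity)
  have hεk : ε * (k+1) = m := by
    rw [hε, div_mul_cancel₀]; positivity
  set δ : X → B → ℝ := fun x y => ε * ∑ i : Fin (k+1),
     ((if r i = x ∧ b (i+1) = y then (1:ℝ) else 0) - (if r i = x ∧ b i = y then (1:ℝ) else 0))
     with hδ
  set σ : X → B → ℝ := fun x y => σstar x y + δ x y with hσdef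
  -- plan properties
  have hplan : IsDiscretePlan μ ν σ := by
    refine ⟨?_, ?_, ?_⟩
    · intro x y
      by_cases hxy : ∃ i, r i = x ∧ b i = y
      · have h1 : m ≤ σstar x y := by
          obtain ⟨i, hi1, hi2⟩ := hxy
          simpa [hi1, hi2] using hmle i
        have h2 : ∑ i : Fin (k+1),
            ((if r i = x ∧ b (i+1) = y then (1:ℝ) else 0) - (if r i = x ∧ b i = y then (1:ℝ) else 0))
            ≥ -(k+1) := by
          calc _ ≥ ∑ i : Fin (k+1), (-1 : ℝ) := by
                apply Finset.sum_le_sum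
                intro i _
                split_ifs <;> norm_num
            _ = -(k+1) := by simp
        have : δ x y ≥ -m := by
          rw [hδ]
          calc ε * ∑ i : Fin (k+1), _ ≥ ε * (-(k+1)) := by
                exact mul_le_mul_of_nonneg_left h2 hεpos.le
            _ = -m := by rw [mul_neg, hεk]
        simp only [hσdef]; linarith
      · push_neg at hxy
        have h2 : (0:ℝ) ≤ ∑ i : Fin (k+1),
            ((if r i = x ∧ b (i+1) = y then (1:ℝ) else 0) - (if r i = x ∧ b i = y then (1:ℝ) else 0)) := by
          apply Finset.sum_nonneg
          intro i _
          have : ¬ (r i = x ∧ b i = y) := fun h => hxy i h.1 h.2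
          rw [if_neg this]
          split_ifs <;> norm_num
        have : 0 ≤ δ x y := mul_nonneg hεpos.le h2
        have := hnn x y
        simp only [hσdef]; linarith
    · intro x
      have : ∑ y : B, δ x y = 0 := by
        rw [hδ]
        simp only [← Finset.mul_sum]
        rw [Finset.sum_comm]
        have : ∀ i : Fin (k+1), ∑ y : B,
            ((if r i = x ∧ b (i+1) = y then (1:ℝ) else 0) - (if r i = x ∧ b i = y then (1:ℝ) else 0)) = 0 := by
          intro i
          rw [Finset.sum_sub_distrib]
          simp [ite_and]
        rw [Finset.sum_congr rfl (fun i _ => this i)]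
        simp
      simp only [hσdef]
      rw [Finset.sum_add_distrib, this, add_zero, hrow]
    · intro y
      have : ∑ x : X, δ x y = 0 := by
        rw [hδ]
        simp only [← Finset.mul_sum]
        rw [Finset.sum_comm]
        have key : ∀ i : Fin (k+1), ∑ x : X,
            ((if r i = x ∧ b (i+1) = y then (1:ℝ) else 0) - (if r i = x ∧ b i = y then (1:ℝ) else 0)) =
            (if b (i+1) = y then (1:ℝ) else 0) - (if b i = y then (1:ℝ) else 0) := by
          intro i
          rw [Finset.sum_sub_distrib]
          simp [ite_and]
        rw [Finset.sum_congr rfl (fun i _ => key i)]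
        rw [Finset.sum_sub_distrib]
        have : ∑ i : Fin (k+1), (if b (i+1) = y then (1:ℝ) else 0)
             = ∑ i : Fin (k+1), (if b i = y then (1:ℝ) else 0) := by
          exact Fintype.sum_equiv (Equiv.addRight 1) _ _ (fun i => rfl)
        rw [this]
        simp
      simp only [hσdef]
      rw [Finset.sum_add_distrib, this, add_zero, hcol]
  -- cost computation
  have hcost : ∑ x : X, ∑ y : B, σ x y * c x y
      = (∑ x : X, ∑ y : B, σstar x y * c x y)
        + ε * (∑ i, c (r i) (b (i+1)) - ∑ i, c (r i) (b i)) := by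
    simp only [hσdef, add_mul]
    rw [Finset.sum_congr rfl (fun x _ => Finset.sum_add_distrib), Finset.sum_add_distrib]
    congr 1
    have hterm : ∀ x y, δ x y * c x y = ε * ∑ i : Fin (k+1),
        ((if r i = x ∧ b (i+1) = y then c x y else 0) - (if r i = x ∧ b i = y then c x y else 0)) := by
      intro x y
      rw [hδ, mul_assoc, Finset.sum_mul]
      congr 1
      apply Finset.sum_congr rfl
      intro i _
      rw [sub_mul]
      congr 1 <;> split_ifs <;> simp
    calc ∑ x : X, ∑ y : B, δ x y * c x y
        = ε * ∑ x : X, ∑ y : B, ∑ i : Fin (k+1),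
            ((if r i = x ∧ b (i+1) = y then c x y else 0) - (if r i = x ∧ b i = y then c x y else 0)) := by
          simp only [hterm, ← Finset.mul_sum]
      _ = ε * ∑ i : Fin (k+1), ∑ x : X, ∑ y : B,
            ((if r i = x ∧ b (i+1) = y then c x y else 0) - (if r i = x ∧ b i = y then c x y else 0)) := by
          congr 1
          rw [Finset.sum_congr rfl (fun x _ => Finset.sum_comm), Finset.sum_comm]
      _ = ε * (∑ i, c (r i) (b (i+1)) - ∑ i, c (r i) (b i)) := by
          congr 1
          rw [← Finset.sum_sub_distrib]
          apply Finset.sum_congr rfl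
          intro i _
          have h1 : ∀ j : Fin (k+1), ∑ x : X, ∑ y : B, (if r i = x ∧ b j = y then c x y else 0)
              = c (r i) (b j) := by
            intro j
            simp [ite_and]
          rw [Finset.sum_congr rfl (fun x _ => Finset.sum_sub_distrib _ _), Finset.sum_sub_distrib,
            h1, h1]
  have := hmin σ hplan
  rw [hcost] at this
  nlinarith [hεpos]


lemma path_of_rtg {B : Type*} {step : B → B → Prop} {a b : B}
    (h : Relation.ReflTransGen step a b) :
    ∃ (k : ℕ) (p : ℕ → B), p 0 = a ∧ p k = b ∧ ∀ t < k, step (p t) (p (t+1)) := by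
  induction h with
  | refl => exact ⟨0, fun _ => a, rfl, rfl, by omega⟩
  | @tail b' c' _ hstep ih =>
    obtain ⟨k, p, h0, hk, hs⟩ := ih
    refine ⟨k+1, fun t => if t ≤ k then p t else c', by simp [h0], by simp, ?_⟩
    intro t ht
    by_cases h1 : t + 1 ≤ k
    · simp only [if_pos (by omega : t ≤ k), if_pos h1]
      exact hs t (by omega)
    · have ht' : t = k := by omega
      subst ht'
      simp only [if_pos (le_refl t), if_neg (by omega : ¬ t + 1 ≤ t), hk]
      exact hstep

lemma path_shortcut {B : Type*} (step : B → B → Prop) :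
    ∀ (k : ℕ) (p : ℕ → B), (∀ t < k, step (p t) (p (t+1))) →
    ∃ (k' : ℕ) (q : ℕ → B), q 0 = p 0 ∧ q k' = p k ∧ (∀ t < k', step (q t) (q (t+1))) ∧
      ∀ i ≤ k', ∀ j ≤ k', q i = q j → i = j := by
  intro k
  induction k using Nat.strong_induction_on with
  | _ k IH =>
    intro p hp
    by_cases hinj : ∀ i ≤ k, ∀ j ≤ k, p i = p j → i = j
    · exact ⟨k, p, rfl, rfl, hp, hinj⟩
    · push_neg at hinj
      obtain ⟨i, hi, j, hj, hpij, hij⟩ := hinj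
      -- wlog i < j
      obtain ⟨i, j, hi, hj, hpij, hij⟩ : ∃ i j, i ≤ k ∧ j ≤ k ∧ p i = p j ∧ i < j := by
        rcases lt_or_gt_of_ne hij with h | h
        · exact ⟨i, j, hi, hj, hpij, h⟩
        · exact ⟨j, i, hj, hi, hpij.symm, h⟩
      set d := j - i with hd
      have hdpos : 0 < d := by omega
      set p' : ℕ → B := fun t => if t ≤ i then p t else p (t + d) with hp'
      have hk' : k - d < k := by omega
      have hstep' : ∀ t < k - d, step (p' t) (p' (t+1)) := by
        intro t ht
        by_cases h1 : t + 1 ≤ i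
        · simp only [hp', if_pos (by omega : t ≤ i), if_pos h1]
          exact hp t (by omega)
        · by_cases h2 : t ≤ i
          · have : t = i := by omega
            subst this
            simp only [hp', if_pos (le_refl t), if_neg h1]
            have : t + 1 + d = j + 1 := by omega
            rw [this, hpij]
            exact hp j (by omega)
          · simp only [hp', if_neg h2, if_neg (by omega : ¬ t + 1 ≤ i)]
            have : t + 1 + d = (t + d) + 1 := by omega
            rw [this]
            exact hp (t + d) (by omega)
      have hend : p' (k - d) = p k := by
        by_cases h : k - d ≤ i
        · have hki : k - d = i := by omega
          have hjk : j = k := by omega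
          show (if k - d ≤ i then p (k-d) else p (k-d+d)) = p k
          rw [if_pos h, hki, hpij, hjk]
        · simp only [hp', if_neg h]
          congr 1
          omega
      obtain ⟨k', q, hq0, hqk, hqs, hqinj⟩ := IH (k - d) hk' p' hstep'
      refine ⟨k', q, ?_, ?_, hqs, hqinj⟩
      · rw [hq0]; simp [hp']
      · rw [hqk, hend]

section Main
open Finset

lemma reach_key {X B : Type*} [Fintype X] [Fintype B]
    (μ : X → ℝ) (ν : B → ℝ)
    (σ' : X → B → ℝ) (hσ' : IsDiscretePlan μ ν σ')
    (σstar : X → B → ℝ) (hstar : IsDiscretePlan μ ν σstar)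
    (r0 : X) (b0 : B) (hpos0 : 0 < σstar r0 b0) :
    ∃ bs : B, Relation.ReflTransGen
        (fun b b' => ∃ x, 0 < σ' x b ∧ 0 < σstar x b') b0 bs ∧ 0 < σ' r0 bs := by
  classical
  obtain ⟨hnn', hrow', hcol'⟩ := hσ'
  obtain ⟨hnn, hrow, hcol⟩ := hstar
  set step : B → B → Prop := fun b b' => ∃ x, 0 < σ' x b ∧ 0 < σstar x b' with hstepdef
  set S : Finset B := univ.filter (fun b => Relation.ReflTransGen step b0 b) with hS
  set R : Finset X := univ.filter (fun x => ∃ b ∈ S, 0 < σ' x b) with hR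
  have hb0S : b0 ∈ S := by
    simp only [hS, mem_filter, mem_univ, true_and]
    exact Relation.ReflTransGen.refl
  -- if r ∉ R then σ' r b = 0 for b ∈ S
  have hnotR : ∀ x ∉ R, ∀ b ∈ S, σ' x b = 0 := by
    intro x hx b hb
    simp only [hR, mem_filter, mem_univ, true_and, not_exists] at hx
    have h2 : ¬ 0 < σ' x b := fun hp => hx b ⟨hb, hp⟩
    have := hnn' x b
    linarith
  -- if r ∈ R and b ∉ S then σstar r b = 0
  have hRclosed : ∀ x ∈ R, ∀ b, b ∉ S → σstar x b = 0 := by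
    intro x hx b hb
    by_contra hne
    have hpos : 0 < σstar x b := lt_of_le_of_ne (hnn x b) (Ne.symm hne)
    simp only [hR, mem_filter, mem_univ, true_and] at hx
    obtain ⟨b', hb', hσ'pos⟩ := hx
    simp only [hS, mem_filter, mem_univ, true_and] at hb' hb
    exact hb (hb'.tail ⟨x, hσ'pos, hpos⟩)
  -- the chain of inequalities
  have E1 : ∑ b ∈ S, ν b = ∑ x ∈ R, ∑ b ∈ S, σ' x b := by
    calc ∑ b ∈ S, ν b = ∑ b ∈ S, ∑ x : X, σ' x b := by
          exact Finset.sum_congr rfl (fun b _ => (hcol' b).symm)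
      _ = ∑ x : X, ∑ b ∈ S, σ' x b := Finset.sum_comm
      _ = ∑ x ∈ R, ∑ b ∈ S, σ' x b := by
          symm
          apply Finset.sum_subset (subset_univ R)
          intro x _ hx
          exact Finset.sum_eq_zero (fun b hb => hnotR x hx b hb)
  have E2 : ∑ x ∈ R, ∑ b ∈ S, σ' x b ≤ ∑ x ∈ R, μ x := by
    apply Finset.sum_le_sum
    intro x _
    rw [← hrow' x]
    exact Finset.sum_le_sum_of_subset_of_nonneg (subset_univ S) (fun b _ _ => hnn' x b)
  have E3 : ∑ x ∈ R, μ x = ∑ x ∈ R, ∑ b ∈ S, σstar x b := by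
    apply Finset.sum_congr rfl
    intro x hx
    rw [← hrow x]
    symm
    apply Finset.sum_subset (subset_univ S)
    intro b _ hb
    exact hRclosed x hx b hb
  have E4 : ∑ x : X, ∑ b ∈ S, σstar x b = ∑ b ∈ S, ν b := by
    rw [Finset.sum_comm]
    exact Finset.sum_congr rfl (fun b _ => hcol b)
  have Esplit : ∑ x ∈ R, ∑ b ∈ S, σstar x b + ∑ x ∈ Rᶜ, ∑ b ∈ S, σstar x b
      = ∑ x : X, ∑ b ∈ S, σstar x b := by
    rw [Finset.sum_add_sum_compl]
  have hcompl_nonneg : 0 ≤ ∑ x ∈ Rᶜ, ∑ b ∈ S, σstar x b :=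
    Finset.sum_nonneg (fun x _ => Finset.sum_nonneg (fun b _ => hnn x b))
  have hcompl_zero : ∑ x ∈ Rᶜ, ∑ b ∈ S, σstar x b = 0 := by linarith
  -- r0 ∈ R
  have hr0R : r0 ∈ R := by
    by_contra hr0
    have hterm : σstar r0 b0 = 0 := by
      have h1 : ∑ b ∈ S, σstar r0 b = 0 := by
        have := (Finset.sum_eq_zero_iff_of_nonneg
          (fun x _ => Finset.sum_nonneg (fun b _ => hnn x b))).mp hcompl_zero
        exact this r0 (by simpa using hr0)
      have := (Finset.sum_eq_zero_iff_of_nonneg (fun b _ => hnn r0 b)).mp h1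
      exact this b0 hb0S
    linarith
  simp only [hR, mem_filter, mem_univ, true_and] at hr0R
  obtain ⟨bs, hbs, hσ'bs⟩ := hr0R
  simp only [hS, mem_filter, mem_univ, true_and] at hbs
  exact ⟨bs, hbs, hσ'bs⟩

end Main

/-- If there exists a transport plan from `μ̂` to `ν` that only uses edges of cost at most
`4`, then every minimum-cost transport plan only uses edges of cost at most `4n`, where
`n = |B|`. -/
theorem min_cost_plan_small_cost_edges {X B : Type*} [Fintype X] [Fintype B]
    (c : X → B → ℝ) (hc : ∀ r b, 0 ≤ c r b)
    (μ : X → ℝ) (ν : B → ℝ) (hμ : ∀ r, 0 ≤ μ r) (hν : ∀ b, 0 ≤ ν b)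
    (hbal : ∑ r : X, μ r = ∑ b : B, ν b)
    (σ' : X → B → ℝ) (hσ' : IsDiscretePlan μ ν σ')
    (hσ'c : ∀ r b, 0 < σ' r b → c r b ≤ 4)
    (σstar : X → B → ℝ) (hstar : IsDiscretePlan μ ν σstar)
    (hmin : ∀ σ : X → B → ℝ, IsDiscretePlan μ ν σ →
      ∑ r : X, ∑ b : B, σstar r b * c r b ≤ ∑ r : X, ∑ b : B, σ r b * c r b) :
    ∀ r b, 0 < σstar r b → c r b ≤ 4 * (Fintype.card B : ℝ) := by
  classical
  intro r0 b0 hpos0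
  obtain ⟨bs, hreach, hσ'bs⟩ := reach_key μ ν σ' hσ' σstar hstar r0 b0 hpos0
  obtain ⟨k₀, p₀, hp0₀, hpk₀, hsteps₀⟩ := path_of_rtg hreach
  obtain ⟨k, p, hp0', hpk', hsteps, hinj⟩ := path_shortcut (fun b b' => ∃ x, 0 < σ' x b ∧ 0 < σstar x b') k₀ p₀ hsteps₀
  rw [hp0₀] at hp0'
  rw [hpk₀] at hpk'
  -- cardinality bound : k + 1 ≤ card B
  have hcard : k + 1 ≤ Fintype.card B := by
    have : (Finset.range (k+1)).card ≤ (Finset.univ : Finset B).card := by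
      apply Finset.card_le_card_of_injOn p (fun a _ => Finset.mem_univ _)
      intro i hi j hj hij
      simp only [Finset.coe_range, Set.mem_Iio] at hi hj
      exact hinj i (by omega) j (by omega) hij
    simpa using this
  -- build the cycle
  set b : Fin (k+1) → B := fun i => p (k - (i:ℕ)) with hb
  have hwit : ∀ t, t < k → ∃ x, 0 < σ' x (p t) ∧ 0 < σstar x (p (t+1)) := hsteps
  set r : Fin (k+1) → X := fun i =>
    if h : (i:ℕ) < k then (hwit (k - (i:ℕ) - 1) (by omega)).choose else r0 with hr
  have hbpos : ∀ i, 0 < σstar (r i) (b i) := by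
    intro i
    by_cases h : (i:ℕ) < k
    · have hspec := (hwit (k - (i:ℕ) - 1) (by omega)).choose_spec
      have h2 : p (k - (i:ℕ) - 1 + 1) = p (k - (i:ℕ)) := by
        congr 1 <;> omega
      simp only [hr, hb, dif_pos h]
      rw [← h2]
      exact hspec.2
    · have hik : (i:ℕ) = k := by omega
      simp only [hr, hb, dif_neg h, hik, Nat.sub_self, hp0']
      exact hpos0
  have hσ'edge : ∀ i : Fin (k+1), 0 < σ' (r i) (b (i+1)) := by
    intro i
    by_cases h : (i:ℕ) < k
    · have hspec := (hwit (k - (i:ℕ) - 1) (by omega)).choose_spec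
      have hval : ((i + 1 : Fin (k+1)) : ℕ) = (i:ℕ) + 1 := by
        rw [Fin.val_add_one_of_lt]
        exact (Fin.lt_iff_val_lt_val.mpr (by simpa using h))
      simp only [hr, hb, dif_pos h, hval]
      have h2 : p (k - ((i:ℕ) + 1)) = p (k - (i:ℕ) - 1) := by
        congr 1 <;> omega
      rw [h2]
      exact hspec.1
    · have hik : (i:ℕ) = k := by omega
      have hlast : i = Fin.last k := by
        apply Fin.ext; simpa using hik
      have hval : ((i + 1 : Fin (k+1)) : ℕ) = 0 := by
        rw [hlast, Fin.last_add_one]; rfl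
      simp only [hr, hb, dif_neg h, hval, Nat.sub_zero, hpk']
      exact hσ'bs
  have hcyc := cyclic_mono c μ ν σstar hstar hmin k r b hbpos
  have hub : ∑ i, c (r i) (b (i+1)) ≤ 4 * (k+1 : ℝ) := by
    calc ∑ i : Fin (k+1), c (r i) (b (i+1)) ≤ ∑ i : Fin (k+1), (4:ℝ) :=
          Finset.sum_le_sum (fun i _ => hσ'c _ _ (hσ'edge i))
      _ = 4 * (k+1 : ℝ) := by simp [mul_comm]
  have hlb : c r0 b0 ≤ ∑ i, c (r i) (b i) := by
    have hterm : c (r (Fin.last k)) (b (Fin.last k)) = c r0 b0 := by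
      simp only [hr, hb, dif_neg (by simp : ¬ ((Fin.last k : Fin (k+1)) : ℕ) < k),
        Fin.val_last, Nat.sub_self, hp0']
    calc c r0 b0 = c (r (Fin.last k)) (b (Fin.last k)) := hterm.symm
      _ ≤ ∑ i, c (r i) (b i) :=
          Finset.single_le_sum (fun i _ => hc _ _) (Finset.mem_univ _)
  have hkcard : (k + 1 : ℝ) ≤ (Fintype.card B : ℝ) := by exact_mod_cast hcard
  linarith
end

section
/- Let μ be a compactly supported Borel probability measure on ℝ^d, let B ⊂ ℝ^d be a finite set, let ν be a probability distribution on B, and let ε ∈ (0,1). Let X ⊆ ℝ^d be a measurable set such that every a ∈ X satisfies ‖a − b₁‖ ≥ (1/ε)‖b₁ − b₂‖ for all b₁, b₂ ∈ B. Then for any two transport plans τ and τ̃ from μ to ν, Σ_{b∈B} ∫_X ‖a − b‖ dτ_b(a) ≤ (1+ε) Σ_{b∈B} ∫_X ‖a − b‖ dτ̃_b(a), where ‖·‖ denotes the Euclidean norm. -/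
open MeasureTheory
open scoped ENNReal

noncomputable section

/-- If every point of the measurable set `X` is at distance at least `(1/ε)‖b₁ - b₂‖` from
every `b₁ ∈ B` (for all `b₂ ∈ B`), then the transport cost restricted to `X` of any two
transport plans from `μ` to `ν` differ by at most a `(1+ε)` multiplicative factor. -/
theorem far_mass_routed_arbitrarily {d : ℕ}
    (μ : Measure (EuclideanSpace ℝ (Fin d))) [IsProbabilityMeasure μ]
    (hμc : ∃ K : Set (EuclideanSpace ℝ (Fin d)), IsCompact K ∧ μ Kᶜ = 0)
    (B : Finset (EuclideanSpace ℝ (Fin d)))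
    (ν : EuclideanSpace ℝ (Fin d) → ℝ≥0∞) (hν : ∑ b ∈ B, ν b = 1)
    (ε : ℝ) (hε0 : 0 < ε) (hε1 : ε < 1)
    (X : Set (EuclideanSpace ℝ (Fin d))) (hX : MeasurableSet X)
    (hfar : ∀ a ∈ X, ∀ b₁ ∈ B, ∀ b₂ ∈ B, (1 / ε) * ‖b₁ - b₂‖ ≤ ‖a - b₁‖)
    (τ τ' : EuclideanSpace ℝ (Fin d) → Measure (EuclideanSpace ℝ (Fin d)))
    (hτ : IsSemiDiscretePlan μ B ν τ) (hτ' : IsSemiDiscretePlan μ B ν τ') :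
    ∑ b ∈ B, ∫ a in X, ‖a - b‖ ∂(τ b) ≤
      (1 + ε) * ∑ b ∈ B, ∫ a in X, ‖a - b‖ ∂(τ' b) := by
  -- B is nonempty
  have hB : B.Nonempty := by
    rcases Finset.eq_empty_or_nonempty B with h | h
    · exfalso; rw [h] at hν; simp at hν
    · exact h
  obtain ⟨K, hKc, hKμ⟩ := hμc
  -- τ b ≤ μ for b ∈ B, similarly τ' b
  have hle : ∀ σ : EuclideanSpace ℝ (Fin d) → Measure (EuclideanSpace ℝ (Fin d)),
      (∑ b ∈ B, σ b) = μ → ∀ b ∈ B, σ b ≤ μ := by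
    intro σ hσ b hb
    rw [← hσ]
    intro s
    rw [Measure.finset_sum_apply]
    exact Finset.single_le_sum (f := fun c => σ c s) (fun c _ => zero_le) hb
  -- finiteness of τ b
  have hfin : ∀ σ : EuclideanSpace ℝ (Fin d) → Measure (EuclideanSpace ℝ (Fin d)),
      (∑ b ∈ B, σ b) = μ → ∀ b ∈ B, IsFiniteMeasure (σ b) := by
    intro σ hσ b hb
    refine ⟨?_⟩
    calc σ b Set.univ ≤ μ Set.univ := hle σ hσ b hb _
    _ < ⊤ := by simp [measure_lt_top]
  -- min distance function
  set g : EuclideanSpace ℝ (Fin d) → ℝ := fun a => B.inf' hB (fun b => ‖a - b‖) with hg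
  have hg_cont : Continuous g :=
    Continuous.finset_inf'_apply hB fun b _ => (continuous_id.sub continuous_const).norm
  have hg_le : ∀ a, ∀ b ∈ B, g a ≤ ‖a - b‖ := fun a b hb => Finset.inf'_le _ hb
  have hg_nonneg : ∀ a, 0 ≤ g a := by
    intro a
    obtain ⟨b, hb, hbe⟩ := Finset.exists_mem_eq_inf' hB (fun b => ‖a - b‖)
    have hga : g a = ‖a - b‖ := hbe
    rw [hga]; positivity
  -- key pointwise bound on X
  have hkey : ∀ a ∈ X, ∀ b ∈ B, ‖a - b‖ ≤ (1 + ε) * g a := by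
    intro a ha b hb
    obtain ⟨b', hb', hbe⟩ := Finset.exists_mem_eq_inf' hB (fun b => ‖a - b‖)
    have hgae : g a = ‖a - b'‖ := hbe
    have hfar' : (1 / ε) * ‖b' - b‖ ≤ ‖a - b'‖ := hfar a ha b' hb' b hb
    have h2 : ‖b' - b‖ ≤ ε * ‖a - b'‖ := by
      rw [mul_comm]
      rwa [div_mul_eq_mul_div, one_mul, div_le_iff₀ hε0] at hfar'
    calc ‖a - b‖ ≤ ‖a - b'‖ + ‖b' - b‖ := by
          have := norm_sub_le_norm_sub_add_norm_sub a b' b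
          linarith
    _ ≤ ‖a - b'‖ + ε * ‖a - b'‖ := by linarith
    _ = (1 + ε) * g a := by rw [hgae]; ring
  -- bound constant on K
  obtain ⟨C, hC⟩ : ∃ C : ℝ, ∀ a ∈ K, ∀ b ∈ B, ‖a - b‖ ≤ C := by
    rcases hKc.isBounded.subset_closedBall 0 with ⟨r, hr⟩
    obtain ⟨R, hR⟩ := (B.finite_toSet.isBounded).subset_closedBall 0
    refine ⟨r + R, fun a ha b hb => ?_⟩
    have h1 : ‖a‖ ≤ r := by simpa [Metric.mem_closedBall, dist_zero_right] using hr ha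
    have h2 : ‖b‖ ≤ R := by simpa [Metric.mem_closedBall, dist_zero_right] using hR hb
    calc ‖a - b‖ ≤ ‖a‖ + ‖b‖ := norm_sub_le a b
    _ ≤ r + R := by linarith
  -- integrability
  have hint : ∀ σ : EuclideanSpace ℝ (Fin d) → Measure (EuclideanSpace ℝ (Fin d)),
      (∑ b ∈ B, σ b) = μ → ∀ b ∈ B, ∀ f : EuclideanSpace ℝ (Fin d) → ℝ,
      Continuous f → (∀ a ∈ K, |f a| ≤ C) → IntegrableOn f X (σ b) := by
    intro σ hσ b hb f hf hfb
    have := hfin σ hσ b hb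
    have hKnull : σ b Kᶜ = 0 := by
      have := hle σ hσ b hb Kᶜ
      exact le_antisymm (le_trans this (le_of_eq hKμ)) zero_le
    have hae : ∀ᵐ a ∂((σ b).restrict X), ‖f a‖ ≤ C := by
      have h1 : ∀ᵐ a ∂(σ b), a ∈ K := by
        rw [MeasureTheory.ae_iff]
        exact hKnull
      have h2 := MeasureTheory.ae_restrict_of_ae (s := X) h1
      filter_upwards [h2] with a ha
      simpa [Real.norm_eq_abs] using hfb a ha
    exact MeasureTheory.Integrable.mono' (integrable_const C)
      (hf.aestronglyMeasurable.restrict) hae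
  have hCg : ∀ a ∈ K, |g a| ≤ C := by
    intro a ha
    obtain ⟨b, hb, hbe⟩ := Finset.exists_mem_eq_inf' hB (fun b => ‖a - b‖)
    have hga : g a = ‖a - b‖ := hbe
    rw [abs_of_nonneg (hg_nonneg a), hga]
    exact hC a ha b hb
  have hCnb : ∀ b ∈ B, ∀ a ∈ K, |‖a - b‖| ≤ C := by
    intro b hb a ha
    rw [abs_of_nonneg (norm_nonneg _)]
    exact hC a ha b hb
  have hcont_nb : ∀ b : EuclideanSpace ℝ (Fin d), Continuous fun a => ‖a - b‖ :=
    fun b => (continuous_id.sub continuous_const).norm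
  -- restrict of sum
  have hrs : ∀ σ : EuclideanSpace ℝ (Fin d) → Measure (EuclideanSpace ℝ (Fin d)),
      (∑ b ∈ B, σ b).restrict X = ∑ b ∈ B, (σ b).restrict X := by
    intro σ
    simp only [← Measure.restrictₗ_apply X]
    exact map_sum (Measure.restrictₗ X) σ B
  -- the integral of g against μ decomposes both ways
  have hdecomp : ∀ σ : EuclideanSpace ℝ (Fin d) → Measure (EuclideanSpace ℝ (Fin d)),
      (∑ b ∈ B, σ b) = μ → ∫ a in X, g a ∂μ = ∑ b ∈ B, ∫ a in X, g a ∂(σ b) := by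
    intro σ hσ
    rw [← hσ, hrs σ]
    exact MeasureTheory.integral_finset_sum_measure (fun b hb => hint σ hσ b hb g hg_cont hCg)
  obtain ⟨hτ1, _⟩ := hτ
  obtain ⟨hτ'1, _⟩ := hτ'
  -- main chain
  have step1 : ∑ b ∈ B, ∫ a in X, ‖a - b‖ ∂(τ b) ≤ (1 + ε) * ∫ a in X, g a ∂μ := by
    have : ∀ b ∈ B, ∫ a in X, ‖a - b‖ ∂(τ b) ≤ (1 + ε) * ∫ a in X, g a ∂(τ b) := by
      intro b hb
      rw [← MeasureTheory.integral_const_mul]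
      apply MeasureTheory.integral_mono_ae
      · exact hint τ hτ1 b hb _ (hcont_nb b) (hCnb b hb)
      · exact ((hint τ hτ1 b hb g hg_cont hCg).const_mul _)
      · filter_upwards [MeasureTheory.ae_restrict_mem hX] with a ha
        exact hkey a ha b hb
    calc ∑ b ∈ B, ∫ a in X, ‖a - b‖ ∂(τ b)
        ≤ ∑ b ∈ B, (1 + ε) * ∫ a in X, g a ∂(τ b) := Finset.sum_le_sum this
    _ = (1 + ε) * ∑ b ∈ B, ∫ a in X, g a ∂(τ b) := by rw [Finset.mul_sum]
    _ = (1 + ε) * ∫ a in X, g a ∂μ := by rw [hdecomp τ hτ1]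
  have step2 : ∫ a in X, g a ∂μ ≤ ∑ b ∈ B, ∫ a in X, ‖a - b‖ ∂(τ' b) := by
    rw [hdecomp τ' hτ'1]
    apply Finset.sum_le_sum
    intro b hb
    apply MeasureTheory.integral_mono_ae
    · exact hint τ' hτ'1 b hb g hg_cont hCg
    · exact hint τ' hτ'1 b hb _ (hcont_nb b) (hCnb b hb)
    · filter_upwards with a
      exact hg_le a b hb
  calc ∑ b ∈ B, ∫ a in X, ‖a - b‖ ∂(τ b) ≤ (1 + ε) * ∫ a in X, g a ∂μ := step1
  _ ≤ (1 + ε) * ∑ b ∈ B, ∫ a in X, ‖a - b‖ ∂(τ' b) := by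
      apply mul_le_mul_of_nonneg_left step2; linarith

end
end

section
/- Let ε ∈ (0, 1/2) and let x, y, b, b' ∈ ℝ^d be points with ‖b − b'‖ ≥ 1, ‖x − b‖ ≤ ε, and ‖y − b‖ ≤ ε, where ‖·‖ is the Euclidean norm. Then ‖x − b‖ + ‖y − b'‖ ≤ (1 + 6ε)‖x − b'‖ + ‖y − b‖. -/
/-- The exchange inequality within the `ε`-neighborhood of `b` (after normalizing so that
the distance from `b` to any other support point is at least `1`): if `ε ∈ (0, 1/2)`,
`‖b - b'‖ ≥ 1`, `‖x - b‖ ≤ ε`, and `‖y - b‖ ≤ ε`, then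
`‖x - b‖ + ‖y - b'‖ ≤ (1 + 6ε)‖x - b'‖ + ‖y - b‖`. -/
theorem exchange_inequality_local_swap {d : ℕ}
    (ε : ℝ) (hε0 : 0 < ε) (hε1 : ε < 1 / 2)
    (x y b b' : EuclideanSpace ℝ (Fin d))
    (hbb' : 1 ≤ ‖b - b'‖) (hx : ‖x - b‖ ≤ ε) (hy : ‖y - b‖ ≤ ε) :
    ‖x - b‖ + ‖y - b'‖ ≤ (1 + 6 * ε) * ‖x - b'‖ + ‖y - b‖ := by
  have h1 : ‖y - b'‖ ≤ ‖y - b‖ + ‖b - x‖ + ‖x - b'‖ := by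
    calc ‖y - b'‖ ≤ ‖y - b‖ + ‖b - b'‖ := norm_sub_le_norm_sub_add_norm_sub _ _ _
    _ ≤ ‖y - b‖ + (‖b - x‖ + ‖x - b'‖) := by
        gcongr; exact norm_sub_le_norm_sub_add_norm_sub _ _ _
    _ = ‖y - b‖ + ‖b - x‖ + ‖x - b'‖ := by ring
  have h2 : ‖b - b'‖ ≤ ‖b - x‖ + ‖x - b'‖ := norm_sub_le_norm_sub_add_norm_sub _ _ _
  have h3 : ‖b - x‖ = ‖x - b‖ := norm_sub_rev _ _
  nlinarith [norm_nonneg (x - b'), norm_nonneg (x - b)]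
end
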